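/- arXiv:2507.10837 — 3 statements merged into one kernel-verified Lean document; each statement's English description precedes it below -/
import Mathlib

section
/- For α > 1 there exist constants c1, c2 > 0 such that for all r, R ∈ (0, 1): c1 * (1 - r R)^(1 - α) ≤ (1/(2π)) ∫_0^{2π} |1 - r R e^{iθ}|^{-α} dθ ≤ c2 * (1 - r R)^(1 - α). -/
open Real intervalIntegral

lemma fr_normSq (ρ θ : ℝ) :
    ‖1 - (ρ:ℂ) * Complex.exp (θ * Complex.I)‖ ^ 2 = (1-ρ)^2 + 2*ρ*(1 - Real.cos θ) := by
  rw [Complex.sq_norm, Complex.normSq_apply]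
  simp [Complex.exp_ofReal_mul_I_re, Complex.exp_ofReal_mul_I_im]
  linear_combination (ρ^2) * Real.sin_sq_add_cos_sq θ

lemma fr_ge (ρ θ : ℝ) (hρ0 : 0 ≤ ρ) (hρ1 : ρ ≤ 1) :
    1 - ρ ≤ ‖1 - (ρ:ℂ) * Complex.exp (θ * Complex.I)‖ := by
  have h := fr_normSq ρ θ
  have h2 : Real.cos θ ≤ 1 := Real.cos_le_one θ
  have h3 : (0:ℝ) ≤ ‖1 - (ρ:ℂ) * Complex.exp (θ * Complex.I)‖ := norm_nonneg _
  nlinarith [h, h2, h3, mul_nonneg hρ0 (by linarith : (0:ℝ) ≤ 1 - Real.cos θ)]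

lemma fr_cont (ρ α : ℝ) (hρ0 : 0 ≤ ρ) (hρ1 : ρ < 1) :
    Continuous fun θ : ℝ => ‖1 - (ρ:ℂ) * Complex.exp (θ * Complex.I)‖ ^ (-α) := by
  have h1 : Continuous fun θ : ℝ => ‖1 - (ρ:ℂ) * Complex.exp (θ * Complex.I)‖ := by
    fun_prop
  refine h1.rpow_const fun θ => Or.inl ?_
  have := fr_ge ρ θ hρ0 hρ1.le
  exact ne_of_gt (lt_of_lt_of_le (by linarith) this)

lemma fr_lower (α ρ : ℝ) (hα : 1 < α) (hρ0 : 0 < ρ) (hρ1 : ρ < 1) :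
    2^(-α) * (1-ρ)^(1-α) ≤
      ∫ θ in (0:ℝ)..(2*π), ‖1 - (ρ:ℂ) * Complex.exp (θ * Complex.I)‖ ^ (-α) := by
  set f : ℝ → ℝ := fun θ => ‖1 - (ρ:ℂ) * Complex.exp (θ * Complex.I)‖ ^ (-α) with hf
  set δ : ℝ := 1 - ρ with hδdef
  have hδ : 0 < δ := by simp [hδdef]; linarith
  have hδ1 : δ < 1 := by simp [hδdef]; linarith
  have hInt : ∀ a b : ℝ, IntervalIntegrable f MeasureTheory.volume a b :=
    fun a b => (fr_cont ρ α hρ0.le hρ1).intervalIntegrable a b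
  have hδ2π : δ ≤ 2*π := by linarith [Real.pi_gt_three]
  have hsplit : (∫ θ in (0:ℝ)..δ, f θ) + (∫ θ in δ..(2*π), f θ) = ∫ θ in (0:ℝ)..(2*π), f θ :=
    integral_add_adjacent_intervals (hInt 0 δ) (hInt δ (2*π))
  have h2 : 0 ≤ ∫ θ in δ..(2*π), f θ :=
    intervalIntegral.integral_nonneg hδ2π
      (fun x _ => Real.rpow_nonneg (norm_nonneg _) _)
  have h3 : (∫ θ in (0:ℝ)..δ, (fun _ : ℝ => (2*δ)^(-α)) θ) ≤ ∫ θ in (0:ℝ)..δ, f θ := by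
    apply intervalIntegral.integral_mono_on hδ.le intervalIntegrable_const (hInt 0 δ)
    intro x hx
    obtain ⟨hx0, hxδ⟩ := hx
    have hFsq := fr_normSq ρ x
    have hcos : 1 - Real.cos x ≤ x^2/2 := by linarith [Real.one_sub_sq_div_two_le_cos (x := x)]
    have hF0 : (0:ℝ) ≤ ‖1 - (ρ:ℂ) * Complex.exp (x * Complex.I)‖ := norm_nonneg _
    have hFle : ‖1 - (ρ:ℂ) * Complex.exp (x * Complex.I)‖ ≤ 2*δ := by
      nlinarith [mul_nonneg hρ0.le (by linarith [Real.cos_le_one x] : (0:ℝ) ≤ 1 - Real.cos x)]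
    exact Real.rpow_le_rpow_of_nonpos (by linarith [fr_ge ρ x hρ0.le hρ1.le])
      hFle (by linarith)
  rw [intervalIntegral.integral_const] at h3
  have hcalc : δ * (2*δ)^(-α) = 2^(-α) * δ^(1-α) := by
    rw [Real.mul_rpow (by norm_num) hδ.le,
      show (1-α) = 1 + (-α) by ring, Real.rpow_add hδ, Real.rpow_one]
    ring
  have : δ * (2*δ)^(-α) ≤ ∫ θ in (0:ℝ)..δ, f θ := by
    simpa [smul_eq_mul] using h3
  linarith [hcalc ▸ this]

lemma fr_point (α ρ x u : ℝ) (hα : 1 < α) (hρ : 1/2 ≤ ρ) (hρ1 : ρ ≤ 1)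
    (hu0 : 0 < u) (huπ : |u| ≤ π) (hcos : Real.cos x = Real.cos u) :
    ‖1 - (ρ:ℂ) * Complex.exp (x * Complex.I)‖ ^ (-α) ≤
      (Real.sqrt 2/π)^(-α) * u^(-α) := by
  have hπ := Real.pi_pos
  have hc : (0:ℝ) < Real.sqrt 2/π := by positivity
  have hcu : (0:ℝ) < (Real.sqrt 2/π) * u := mul_pos hc hu0
  have hFsq := fr_normSq ρ x
  have hcb := Real.cos_le_one_sub_mul_cos_sq huπ
  have hF0 : (0:ℝ) ≤ ‖1 - (ρ:ℂ) * Complex.exp (x * Complex.I)‖ := norm_nonneg _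
  have hsq2 : Real.sqrt 2 ^ 2 = 2 := Real.sq_sqrt (by norm_num)
  have h1 : ((Real.sqrt 2/π)*u)^2 ≤ ‖1 - (ρ:ℂ) * Complex.exp (x * Complex.I)‖^2 := by
    rw [hFsq, hcos]
    have hπ2 : (0:ℝ) < π^2 := by positivity
    have : (2/π^2) * u^2 ≤ 2*ρ*(1 - Real.cos u) := by
      nlinarith [mul_nonneg (by linarith : (0:ℝ) ≤ ρ - 1/2)
          (by positivity : (0:ℝ) ≤ 2/π^2*u^2),
        mul_nonneg (by linarith : (0:ℝ) ≤ ρ)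
          (by nlinarith : (0:ℝ) ≤ 1 - Real.cos u - 2/π^2*u^2)]
    have heq : ((Real.sqrt 2/π)*u)^2 = (2/π^2) * u^2 := by
      field_simp; nlinarith [hsq2]
    nlinarith [sq_nonneg (1-ρ)]
  have hkey : (Real.sqrt 2/π)*u ≤ ‖1 - (ρ:ℂ) * Complex.exp (x * Complex.I)‖ := by
    have h2 := Real.sqrt_le_sqrt h1
    rwa [Real.sqrt_sq hcu.le, Real.sqrt_sq hF0] at h2
  calc ‖1 - (ρ:ℂ) * Complex.exp (x * Complex.I)‖ ^ (-α)
      ≤ ((Real.sqrt 2/π)*u)^(-α) :=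
        Real.rpow_le_rpow_of_nonpos hcu hkey (by linarith)
    _ = (Real.sqrt 2/π)^(-α) * u^(-α) := Real.mul_rpow hc.le hu0.le

lemma fr_int_rpow (α δ : ℝ) (hα : 1 < α) (hδ : 0 < δ) :
    ∫ x in δ..π, x^(-α) ≤ δ^(1-α)/(α-1) := by
  rw [integral_rpow (Or.inr ⟨by intro h; rw [neg_eq_iff_eq_neg] at h; linarith,
    Set.notMem_uIcc_of_lt hδ Real.pi_pos⟩)]
  have hπe : (0:ℝ) ≤ π^(-α+1) := Real.rpow_nonneg Real.pi_pos.le _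
  have h : (π^(-α+1) - δ^(-α+1))/(-α+1) = (δ^(-α+1) - π^(-α+1))/(α-1) := by
    rw [show (-α+1) = -(α-1) by ring, div_neg, ← neg_div, neg_sub]
  rw [h, show (1-α) = -α+1 by ring]
  exact (div_le_div_iff_of_pos_right (by linarith)).mpr (by linarith)

lemma fr_upper_raw (α ρ : ℝ) (hα : 1 < α) (hρ0 : 0 < ρ) (hρ1 : ρ < 1) :
    (∫ θ in (0:ℝ)..(2*π), ‖1 - (ρ:ℂ) * Complex.exp (θ * Complex.I)‖ ^ (-α)) ≤
      (4*π + 2 + 2*(Real.sqrt 2/π)^(-α)/(α-1)) * (1-ρ)^(1-α) := by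
  have hπ := Real.pi_pos
  have hπ3 := Real.pi_gt_three
  set f : ℝ → ℝ := fun θ => ‖1 - (ρ:ℂ) * Complex.exp (θ * Complex.I)‖ ^ (-α) with hf
  set δ : ℝ := 1 - ρ with hδdef
  have hδ : 0 < δ := by simp only [hδdef]; linarith
  have hδ1 : δ < 1 := by simp only [hδdef]; linarith
  have hInt : ∀ a b : ℝ, IntervalIntegrable f MeasureTheory.volume a b :=
    fun a b => (fr_cont ρ α hρ0.le hρ1).intervalIntegrable a b
  set c : ℝ := Real.sqrt 2/π with hcdef
  have hc : 0 < c := by positivity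
  have hcα : (0:ℝ) ≤ c^(-α) := Real.rpow_nonneg hc.le _
  have hδe0 : 0 < δ^(1-α) := Real.rpow_pos_of_pos hδ _
  have hδrw : δ * δ^(-α) = δ^(1-α) := by
    rw [show (1-α) = 1 + (-α) by ring, Real.rpow_add hδ, Real.rpow_one]
  by_cases hcase : ρ < 1/2
  · -- easy case : δ > 1/2
    have hδhalf : 1/2 < δ := by simp only [hδdef]; linarith
    have hmono : (∫ θ in (0:ℝ)..(2*π), f θ) ≤
        ∫ θ in (0:ℝ)..(2*π), (fun _ : ℝ => δ^(-α)) θ := by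
      apply intervalIntegral.integral_mono_on (by linarith) (hInt 0 (2*π))
        intervalIntegrable_const
      intro x _
      exact Real.rpow_le_rpow_of_nonpos hδ (fr_ge ρ x hρ0.le hρ1.le) (by linarith)
    rw [intervalIntegral.integral_const, smul_eq_mul] at hmono
    have hδα : δ^(-α) ≤ 2 * δ^(1-α) := by
      have h1 : δ^(-α) = δ⁻¹ * δ^(1-α) := by
        rw [← Real.rpow_neg_one δ, ← Real.rpow_add hδ]; ring_nf
      have h2 : δ⁻¹ ≤ 2 := by
        rw [show δ⁻¹ = 1/δ from (one_div _).symm, div_le_iff₀ hδ]; linarith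
      rw [h1]; exact mul_le_mul_of_nonneg_right h2 hδe0.le
    have h3 := mul_le_mul_of_nonneg_left hδα (by linarith : (0:ℝ) ≤ 2*π - 0)
    have h4 : 0 ≤ (2*c^(-α)/(α-1)) * δ^(1-α) :=
      mul_nonneg (div_nonneg (mul_nonneg (by norm_num) hcα) (by linarith)) hδe0.le
    nlinarith [h3, hmono, h4]
  · push_neg at hcase
    have hδhalf : δ ≤ 1/2 := by simp only [hδdef]; linarith
    have hδπ : δ ≤ π := by linarith
    have hππ : π ≤ 2*π - δ := by linarith
    -- splitting
    have e1 := integral_add_adjacent_intervals (hInt 0 δ) (hInt δ π)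
    have e2 := integral_add_adjacent_intervals (hInt 0 π) (hInt π (2*π-δ))
    have e3 := integral_add_adjacent_intervals (hInt 0 (2*π-δ)) (hInt (2*π-δ) (2*π))
    -- piece 1
    have hP1 : (∫ θ in (0:ℝ)..δ, f θ) ≤ δ^(1-α) := by
      have h := intervalIntegral.integral_mono_on hδ.le (hInt 0 δ)
        intervalIntegrable_const
        (fun x _ => Real.rpow_le_rpow_of_nonpos hδ (fr_ge ρ x hρ0.le hρ1.le)
          (by linarith : -α ≤ 0))
      rw [intervalIntegral.integral_const, smul_eq_mul, sub_zero] at h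
      linarith [hδrw ▸ h]
    -- piece 4
    have hP4 : (∫ θ in (2*π-δ)..(2*π), f θ) ≤ δ^(1-α) := by
      have h := intervalIntegral.integral_mono_on (by linarith : 2*π-δ ≤ 2*π)
        (hInt (2*π-δ) (2*π)) intervalIntegrable_const
        (fun x _ => Real.rpow_le_rpow_of_nonpos hδ (fr_ge ρ x hρ0.le hρ1.le)
          (by linarith : -α ≤ 0))
      rw [intervalIntegral.integral_const, smul_eq_mul,
        show 2*π - (2*π-δ) = δ by ring] at h
      linarith [hδrw ▸ h]
    -- piece 2
    have hint_u : IntervalIntegrable (fun x:ℝ => x^(-α)) MeasureTheory.volume δ π :=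
      intervalIntegral.intervalIntegrable_rpow
        (Or.inr (Set.notMem_uIcc_of_lt hδ Real.pi_pos))
    have hP2 : (∫ θ in δ..π, f θ) ≤ c^(-α) * (δ^(1-α)/(α-1)) := by
      have h := intervalIntegral.integral_mono_on hδπ (hInt δ π)
        (hint_u.const_mul (c^(-α)))
        (fun x hx => fr_point α ρ x x hα hcase hρ1.le (lt_of_lt_of_le hδ hx.1)
          (by rw [abs_of_nonneg (by linarith [hx.1] : (0:ℝ) ≤ x)]; exact hx.2) rfl)
      rw [intervalIntegral.integral_const_mul] at h
      exact h.trans (mul_le_mul_of_nonneg_left (fr_int_rpow α δ hα hδ) hcα)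
    -- piece 3
    have hint3 : IntervalIntegrable (fun x:ℝ => c^(-α) * (2*π-x)^(-α))
        MeasureTheory.volume π (2*π-δ) := by
      apply ContinuousOn.intervalIntegrable
      apply ContinuousOn.mul continuousOn_const
      apply ContinuousOn.rpow_const (continuousOn_const.sub continuousOn_id)
      intro x hx
      rw [Set.uIcc_of_le hππ] at hx
      refine Or.inl (ne_of_gt ?_)
      simp only [Pi.sub_apply, id_eq]
      linarith [hx.2]
    have hP3 : (∫ θ in π..(2*π-δ), f θ) ≤ c^(-α) * (δ^(1-α)/(α-1)) := by
      have h := intervalIntegral.integral_mono_on hππ (hInt π (2*π-δ)) hint3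
        (fun x hx => fr_point α ρ x (2*π - x) hα hcase hρ1.le
          (by linarith [hx.2] : (0:ℝ) < 2*π - x)
          (by rw [abs_of_nonneg (by linarith [hx.2] : (0:ℝ) ≤ 2*π - x)]
              linarith [hx.1])
          (Real.cos_two_pi_sub x).symm)
      rw [intervalIntegral.integral_const_mul] at h
      have hcomp : (∫ x in π..(2*π-δ), (2*π - x)^(-α)) = ∫ u in δ..π, u^(-α) := by
        have h2 := integral_comp_sub_left (a := π) (b := 2*π-δ)
          (fun u : ℝ => u^(-α)) (2*π)
        rw [show 2*π - (2*π-δ) = δ by ring, show 2*π - π = π by ring] at h2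
        exact h2
      rw [hcomp] at h
      exact h.trans (mul_le_mul_of_nonneg_left (fr_int_rpow α δ hα hδ) hcα)
    -- combine
    have hexpand : (4*π + 2 + 2*c^(-α)/(α-1)) * δ^(1-α)
        = 4*π*δ^(1-α) + 2*δ^(1-α) + 2*(c^(-α) * (δ^(1-α)/(α-1))) := by ring
    have h4π : 0 ≤ 4*π*δ^(1-α) := by positivity
    rw [hexpand]
    linarith [hP1, hP2, hP3, hP4, e1, e2, e3]

/-- One-dimensional Forelli–Rudin estimate over the unit circle. -/
theorem forelli_rudin_circle (α : ℝ) (hα : 1 < α) :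
    ∃ c1 c2 : ℝ, 0 < c1 ∧ 0 < c2 ∧
      ∀ r ∈ Set.Ioo (0 : ℝ) 1, ∀ R ∈ Set.Ioo (0 : ℝ) 1,
        c1 * (1 - r * R) ^ (1 - α) ≤
          ((2 * Real.pi)⁻¹ * ∫ θ in (0 : ℝ)..(2 * Real.pi),
            ‖1 - (r : ℂ) * (R : ℂ) * Complex.exp (θ * Complex.I)‖ ^ (-α)) ∧
        ((2 * Real.pi)⁻¹ * ∫ θ in (0 : ℝ)..(2 * Real.pi),
            ‖1 - (r : ℂ) * (R : ℂ) * Complex.exp (θ * Complex.I)‖ ^ (-α)) ≤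
          c2 * (1 - r * R) ^ (1 - α) := by
  have hπ := Real.pi_pos
  refine ⟨(2*π)⁻¹ * 2^(-α), (2*π)⁻¹ * (4*π + 2 + 2*(Real.sqrt 2/π)^(-α)/(α-1)),
    by positivity, ?_, ?_⟩
  · apply mul_pos (by positivity)
    have h := div_nonneg (mul_nonneg (by norm_num : (0:ℝ) ≤ 2)
      (Real.rpow_nonneg (by positivity : (0:ℝ) ≤ Real.sqrt 2/π) (-α)))
      (by linarith : (0:ℝ) ≤ α-1)
    linarith
  · intro r hr R hR
    obtain ⟨hr0, hr1⟩ := hr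
    obtain ⟨hR0, hR1⟩ := hR
    have hρ0 : 0 < r*R := mul_pos hr0 hR0
    have hρ1 : r*R < 1 := by nlinarith
    have hlow := fr_lower α (r*R) hα hρ0 hρ1
    have hup := fr_upper_raw α (r*R) hα hρ0 hρ1
    simp only [Complex.ofReal_mul] at hlow hup
    have h2π : (0:ℝ) ≤ (2*π)⁻¹ := by positivity
    constructor
    · calc (2*π)⁻¹ * 2^(-α) * (1 - r*R)^(1-α)
          = (2*π)⁻¹ * (2^(-α) * (1 - r*R)^(1-α)) := by ring
        _ ≤ _ := mul_le_mul_of_nonneg_left hlow h2π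
    · calc (2*π)⁻¹ * ∫ θ in (0:ℝ)..(2*π),
            ‖1 - (r:ℂ) * (R:ℂ) * Complex.exp (θ * Complex.I)‖ ^ (-α)
          ≤ (2*π)⁻¹ * ((4*π + 2 + 2*(Real.sqrt 2/π)^(-α)/(α-1)) * (1-r*R)^(1-α)) :=
            mul_le_mul_of_nonneg_left hup h2π
        _ = (2*π)⁻¹ * (4*π + 2 + 2*(Real.sqrt 2/π)^(-α)/(α-1)) * (1-r*R)^(1-α) := by
            ring
end

section
/- Let f be analytic on the unit disk D and 1 < s < ∞. There is a constant c > 0 (independent of f and R) such that for all R ∈ (0,1): M_s(f, R^2) ≤ c (1 - R)^{1/s - 1} M_1(f, R). -/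
open MeasureTheory intervalIntegral Set Complex Real

noncomputable def cexpI (φ : ℝ) : ℂ := Complex.exp (φ * Complex.I)

lemma norm_cexpI (φ : ℝ) : ‖cexpI φ‖ = 1 := by
  simp [cexpI, Complex.norm_exp]

lemma norm_cexpI_sub_one (φ : ℝ) (h0 : 0 ≤ φ) (h2 : φ ≤ 2*π) :
    ‖cexpI φ - 1‖ = 2 * Real.sin (φ/2) := by
  have h1 : cexpI φ - 1 = Complex.ofReal (Real.cos φ - 1) + Complex.ofReal (Real.sin φ) * Complex.I := by
    rw [cexpI, Complex.exp_mul_I]; push_cast; ring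
  rw [h1, Complex.norm_add_mul_I]
  rw [Real.sin_half_eq_sqrt h0 h2]
  rw [show (Real.cos φ - 1)^2 + (Real.sin φ)^2 = 4 * ((1 - Real.cos φ)/2) by
    have := Real.sin_sq_add_cos_sq φ; nlinarith]
  rw [show (4:ℝ) * ((1 - Real.cos φ)/2) = 2^2 * ((1 - Real.cos φ)/2) by norm_num,
    Real.sqrt_mul (by positivity), Real.sqrt_sq (by norm_num : (0:ℝ) ≤ 2)]

lemma chord (φ : ℝ) (h0 : 0 ≤ φ) (h2 : φ ≤ 2*π) :
    min φ (2*π - φ) ≤ 2 * ‖cexpI φ - 1‖ := by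
  have hπ := Real.pi_pos
  rw [norm_cexpI_sub_one φ h0 h2]
  have hs : min φ (2*π - φ) / 4 ≤ Real.sin (φ/2) := by
    rcases le_or_gt φ π with h | h
    · have := Real.mul_le_sin (x := φ/2) (by linarith) (by linarith)
      have hm : min φ (2*π - φ) = φ := min_eq_left (by linarith)
      rw [hm]
      have h4 : φ / 4 ≤ 2/π * (φ/2) := by
        rw [show 2/π * (φ/2) = φ/π by ring, div_le_div_iff₀ (by norm_num) hπ]
        nlinarith [Real.pi_lt_d2]
      linarith
    · have := Real.mul_le_sin (x := (2*π - φ)/2) (by linarith) (by linarith)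
      have hsin : Real.sin ((2*π - φ)/2) = Real.sin (φ/2) := by
        rw [show (2*π - φ)/2 = π - φ/2 by ring, Real.sin_pi_sub]
      have hm : min φ (2*π - φ) = 2*π - φ := min_eq_right (by linarith)
      rw [hm]
      have h4 : (2*π - φ) / 4 ≤ 2/π * ((2*π - φ)/2) := by
        rw [show 2/π * ((2*π - φ)/2) = (2*π - φ)/π by ring, div_le_div_iff₀ (by norm_num) hπ]
        nlinarith [Real.pi_lt_d2]
      linarith [hsin ▸ this]
  linarith

lemma key_lb (R φ : ℝ) (hR0 : 0 ≤ R) (hR1 : R ≤ 1) (h0 : 0 ≤ φ) (h2 : φ ≤ 2*π) :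
    (1 - R + min φ (2*π - φ)) / 6 ≤ ‖cexpI φ - (R:ℂ)‖ := by
  have n1 : 1 - R ≤ ‖cexpI φ - (R:ℂ)‖ := by
    have := norm_sub_norm_le (cexpI φ) (R:ℂ)
    rw [norm_cexpI] at this
    simpa [Complex.norm_real, _root_.abs_of_nonneg hR0] using this
  have n2 : ‖cexpI φ - 1‖ ≤ ‖cexpI φ - (R:ℂ)‖ + (1 - R) := by
    have h := norm_add_le (cexpI φ - (R:ℂ)) ((R:ℂ) - 1)
    have he : cexpI φ - (R:ℂ) + ((R:ℂ) - 1) = cexpI φ - 1 := by ring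
    rw [he] at h
    have : ‖(R:ℂ) - 1‖ = 1 - R := by
      rw [show (R:ℂ) - 1 = ((R - 1 : ℝ) : ℂ) by push_cast; ring, Complex.norm_real, Real.norm_eq_abs]
      rw [abs_of_nonpos (by linarith)]; ring
    linarith
  have := chord φ h0 h2
  linarith

lemma cexpI_periodic : Function.Periodic (fun φ : ℝ => cexpI φ) (2*π) := by
  intro x
  simp only [cexpI]
  push_cast
  rw [add_mul, Complex.exp_add, Complex.exp_two_pi_mul_I, mul_one]

lemma kernel_pointwise {s R : ℝ} (hs : 1 < s) (hR : R ∈ Set.Ioo (0:ℝ) 1) {φ : ℝ}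
    (h0 : 0 ≤ φ) (h2 : φ ≤ 2*π) :
    ‖cexpI φ - (R:ℂ)‖⁻¹ ^ s ≤
      (6:ℝ)^s * ((1 - R + φ) ^ (-s) + (1 - R + (2*π - φ)) ^ (-s)) := by
  have hπ := Real.pi_pos
  obtain ⟨hR0, hR1⟩ := hR
  set A := 1 - R with hA
  have hA0 : 0 < A := by simp [hA]; linarith
  have hmin : 0 ≤ min φ (2*π - φ) := le_min h0 (by linarith)
  have hlb := key_lb R φ hR0.le hR1.le h0 h2
  have hden : (0:ℝ) < A + min φ (2*π - φ) := by linarith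
  have hn : (0:ℝ) < ‖cexpI φ - (R:ℂ)‖ := lt_of_lt_of_le (by linarith) hlb
  have step1 : ‖cexpI φ - (R:ℂ)‖⁻¹ ≤ 6 * (A + min φ (2*π - φ))⁻¹ := by
    rw [show (6:ℝ) * (A + min φ (2*π - φ))⁻¹ = ((A + min φ (2*π - φ))/6)⁻¹ by
      field_simp]
    exact inv_anti₀ (by linarith) hlb
  have step2 : ‖cexpI φ - (R:ℂ)‖⁻¹ ^ s ≤ (6 * (A + min φ (2*π - φ))⁻¹) ^ s :=
    Real.rpow_le_rpow (inv_nonneg.2 hn.le) step1 (by linarith)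
  have step3 : (6 * (A + min φ (2*π - φ))⁻¹ : ℝ) ^ s
      = (6:ℝ)^s * (A + min φ (2*π - φ)) ^ (-s) := by
    rw [Real.mul_rpow (by norm_num) (inv_nonneg.2 hden.le), Real.inv_rpow hden.le,
      ← Real.rpow_neg hden.le]
  have step4 : (A + min φ (2*π - φ)) ^ (-s) ≤ (A + φ) ^ (-s) + (A + (2*π - φ)) ^ (-s) := by
    rcases min_cases φ (2*π - φ) with ⟨hm, _⟩ | ⟨hm, _⟩ <;> rw [hm]
    · nlinarith [Real.rpow_nonneg (show (0:ℝ) ≤ A + (2*π - φ) by linarith) (-s)]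
    · nlinarith [Real.rpow_nonneg (show (0:ℝ) ≤ A + φ by linarith) (-s)]
  calc ‖cexpI φ - (R:ℂ)‖⁻¹ ^ s ≤ (6:ℝ)^s * (A + min φ (2*π - φ)) ^ (-s) := by
        rw [← step3]; exact step2
    _ ≤ _ := by
        have h6 : (0:ℝ) ≤ (6:ℝ)^s := Real.rpow_nonneg (by norm_num) s
        exact mul_le_mul_of_nonneg_left step4 h6

lemma basic_integral {s A : ℝ} (hs : 1 < s) (hA : 0 < A) :
    ∫ x in A..(A + 2*π), x ^ (-s) ≤ A ^ (1-s) / (s-1) := by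
  have hπ := Real.pi_pos
  rw [integral_rpow (Or.inr ⟨by linarith, by
      rw [Set.mem_uIcc]; push_neg
      constructor <;> intro h <;> [skip; linarith] <;> linarith⟩)]
  have h2 : (0:ℝ) ≤ (A + 2*π) ^ (-s + 1) := Real.rpow_nonneg (by linarith) _
  have h3 : ((A + 2*π) ^ (-s+1) - A ^ (-s+1)) / (-s+1)
      = (A ^ (-s+1) - (A + 2*π) ^ (-s+1)) / (s-1) := by
    rw [show -s+1 = -(s-1) by ring, div_neg]
    ring
  rw [h3, show (1:ℝ)-s = -s+1 by ring]
  apply div_le_div_of_nonneg_right (c := s-1) _ (by linarith) |>.trans_eq rfl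
  linarith

lemma norm_cexpI_sub_pos {R : ℝ} (hR : R ∈ Set.Ioo (0:ℝ) 1) (w : ℂ) (hw : ‖w‖ = 1) :
    1 - R ≤ ‖w - (R:ℂ)‖ := by
  have := norm_sub_norm_le w (R:ℂ)
  rw [hw] at this
  simpa [Complex.norm_real, _root_.abs_of_nonneg hR.1.le] using this

lemma cont_F {R s : ℝ} (hR : R ∈ Set.Ioo (0:ℝ) 1) (hs : 0 ≤ s) :
    Continuous (fun φ : ℝ => ‖cexpI φ - (R:ℂ)‖⁻¹ ^ s) := by
  have hc : Continuous (fun φ : ℝ => ‖cexpI φ - (R:ℂ)‖) := by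
    apply Continuous.norm
    exact (Complex.continuous_exp.comp (by continuity)).sub continuous_const
  have hne : ∀ φ : ℝ, ‖cexpI φ - (R:ℂ)‖ ≠ 0 := fun φ =>
    ne_of_gt (lt_of_lt_of_le (by linarith [hR.2]) (norm_cexpI_sub_pos hR _ (norm_cexpI φ)))
  exact (hc.inv₀ hne).rpow_const (fun x => Or.inr hs)

lemma kernel_integral {s R : ℝ} (hs : 1 < s) (hR : R ∈ Set.Ioo (0:ℝ) 1) (t : ℝ) :
    ∫ θ in (0:ℝ)..(2*π), ‖cexpI t - (R:ℂ) * cexpI θ‖⁻¹ ^ s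
      ≤ 2 * 6^s / (s-1) * (1-R) ^ (1-s) := by
  have hπ := Real.pi_pos
  set A := 1 - R with hA
  have hA0 : 0 < A := by simp [hA]; linarith [hR.2]
  set F : ℝ → ℝ := fun φ => ‖cexpI φ - (R:ℂ)‖⁻¹ ^ s with hF
  -- rewrite integrand
  have hpt : ∀ θ : ℝ, ‖cexpI t - (R:ℂ) * cexpI θ‖ = ‖cexpI (t - θ) - (R:ℂ)‖ := by
    intro θ
    have : cexpI t - (R:ℂ) * cexpI θ = cexpI θ * (cexpI (t - θ) - (R:ℂ)) := by
      have : cexpI θ * cexpI (t - θ) = cexpI t := by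
        simp only [cexpI]; rw [← Complex.exp_add]; push_cast; ring_nf
      rw [mul_sub, this]; ring
    rw [this, norm_mul, norm_cexpI, one_mul]
  have hFper : Function.Periodic F (2*π) := by
    intro x
    simp only [hF]
    have := cexpI_periodic x
    simp only at this
    rw [this]
  have e1 : (∫ θ in (0:ℝ)..(2*π), ‖cexpI t - (R:ℂ) * cexpI θ‖⁻¹ ^ s)
      = ∫ φ in (0:ℝ)..(2*π), F φ := by
    have : (∫ θ in (0:ℝ)..(2*π), ‖cexpI t - (R:ℂ) * cexpI θ‖⁻¹ ^ s)
        = ∫ θ in (0:ℝ)..(2*π), F (t - θ) := by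
      apply intervalIntegral.integral_congr
      intro θ _
      simp only [hF, hpt θ]
    rw [this, intervalIntegral.integral_comp_sub_left F t]
    have := hFper.intervalIntegral_add_eq (t - 2*π) 0
    simpa [sub_add_cancel] using this
  rw [e1]
  -- comparison with the explicit kernel
  set g : ℝ → ℝ := fun φ => (6:ℝ)^s * ((A + φ) ^ (-s) + (A + (2*π - φ)) ^ (-s)) with hg
  have hgint1 : IntervalIntegrable (fun φ : ℝ => (A + φ) ^ (-s)) volume 0 (2*π) := by
    apply ContinuousOn.intervalIntegrable
    apply ContinuousOn.rpow_const
    · fun_prop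
    · intro x hx
      rw [Set.uIcc_of_le (by linarith)] at hx
      exact Or.inl (by nlinarith [hx.1])
  have hgint2 : IntervalIntegrable (fun φ : ℝ => (A + (2*π - φ)) ^ (-s)) volume 0 (2*π) := by
    apply ContinuousOn.intervalIntegrable
    apply ContinuousOn.rpow_const
    · fun_prop
    · intro x hx
      rw [Set.uIcc_of_le (by linarith)] at hx
      exact Or.inl (by nlinarith [hx.2])
  have hcomp : (∫ φ in (0:ℝ)..(2*π), F φ) ≤ ∫ φ in (0:ℝ)..(2*π), g φ := by
    apply intervalIntegral.integral_mono_on (by linarith)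
    · exact (cont_F hR (by linarith)).intervalIntegrable 0 (2*π)
    · exact ((hgint1.add hgint2).const_mul _)
    · intro x hx
      exact kernel_pointwise hs hR hx.1 hx.2
  have hgval : (∫ φ in (0:ℝ)..(2*π), g φ) ≤ (6:ℝ)^s * (2 * (A ^ (1-s) / (s-1))) := by
    rw [hg]
    simp only
    rw [intervalIntegral.integral_const_mul, intervalIntegral.integral_add hgint1 hgint2]
    have i1 : (∫ φ in (0:ℝ)..(2*π), (A + φ) ^ (-s)) ≤ A ^ (1-s) / (s-1) := by
      have : (∫ φ in (0:ℝ)..(2*π), (A + φ) ^ (-s)) = ∫ x in A..(A + 2*π), x ^ (-s) := by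
        simpa using intervalIntegral.integral_comp_add_left (a := (0:ℝ)) (b := 2*π)
          (fun x => x ^ (-s)) A
      rw [this]; exact basic_integral hs hA0
    have i2 : (∫ φ in (0:ℝ)..(2*π), (A + (2*π - φ)) ^ (-s)) ≤ A ^ (1-s) / (s-1) := by
      have e : (∫ φ in (0:ℝ)..(2*π), (A + (2*π - φ)) ^ (-s))
          = ∫ x in A..(A + 2*π), x ^ (-s) := by
        have := intervalIntegral.integral_comp_sub_left (a := (0:ℝ)) (b := 2*π)
          (fun x => x ^ (-s)) (A + 2*π)
        simp only [add_sub_cancel_right, sub_zero] at this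
        rw [← this]
        apply intervalIntegral.integral_congr
        intro x _
        simp only
        ring_nf
      rw [e]; exact basic_integral hs hA0
    have h6 : (0:ℝ) ≤ (6:ℝ)^s := Real.rpow_nonneg (by norm_num) s
    nlinarith
  calc (∫ φ in (0:ℝ)..(2*π), F φ) ≤ (6:ℝ)^s * (2 * (A ^ (1-s) / (s-1))) :=
        hcomp.trans hgval
    _ = 2 * 6^s / (s-1) * A ^ (1-s) := by ring

lemma cauchy_bound {f : ℂ → ℂ} (hf : AnalyticOn ℂ f (Metric.ball 0 1))
    {R : ℝ} (hR : R ∈ Set.Ioo (0:ℝ) 1) (θ : ℝ) :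
    (2*π) * ‖f ((↑(R^2) : ℂ) * cexpI θ)‖ ≤
      ∫ t in (0:ℝ)..(2*π), ‖f ((R:ℂ) * cexpI t)‖ * ‖cexpI t - (R:ℂ) * cexpI θ‖⁻¹ := by
  have hπ := Real.pi_pos
  obtain ⟨hR0, hR1⟩ := hR
  set z : ℂ := (↑(R^2) : ℂ) * cexpI θ with hz
  have hd : DiffContOnCl ℂ f (Metric.ball 0 R) := by
    constructor
    · exact (hf.mono (Metric.ball_subset_ball hR1.le)).differentiableOn
    · rw [closure_ball (0:ℂ) (ne_of_gt hR0)]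
      exact hf.continuousOn.mono (Metric.closedBall_subset_ball hR1)
  have hzball : z ∈ Metric.ball (0:ℂ) R := by
    rw [Metric.mem_ball, dist_zero_right, hz, norm_mul, norm_cexpI, mul_one]
    rw [Complex.norm_real, Real.norm_eq_abs, _root_.abs_of_nonneg (by positivity)]
    nlinarith
  have key := hd.circleIntegral_sub_inv_smul hzball
  have hnorm : (2*π) * ‖f z‖ = ‖∮ w in C(0, R), (w - z)⁻¹ • f w‖ := by
    rw [key]
    simp [Complex.norm_exp, _root_.abs_of_nonneg Real.pi_pos.le,
      norm_smul]
  rw [hnorm]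
  have hle : ‖∮ w in C(0, R), (w - z)⁻¹ • f w‖
      ≤ ∫ t in (0:ℝ)..(2*π), ‖deriv (circleMap 0 R) t • (circleMap 0 R t - z)⁻¹ • f (circleMap 0 R t)‖ := by
    rw [circleIntegral]
    exact intervalIntegral.norm_integral_le_integral_norm (by linarith)
  refine hle.trans (le_of_eq (intervalIntegral.integral_congr fun t _ => ?_))
  have hcm : circleMap 0 R t = (R:ℂ) * cexpI t := circleMap_zero R t
  have hw : circleMap 0 R t - z = (R:ℂ) * (cexpI t - (R:ℂ) * cexpI θ) := by
    rw [hcm, hz]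
    push_cast
    ring
  have hpos : ‖cexpI t - (R:ℂ) * cexpI θ‖ ≠ 0 := by
    have h1 : ‖cexpI t - (R:ℂ) * cexpI θ‖ = ‖cexpI (t - θ) - (R:ℂ)‖ := by
      have : cexpI t - (R:ℂ) * cexpI θ = cexpI θ * (cexpI (t - θ) - (R:ℂ)) := by
        have h2 : cexpI θ * cexpI (t - θ) = cexpI t := by
          simp only [cexpI]; rw [← Complex.exp_add]; push_cast; ring_nf
        rw [mul_sub, h2]; ring
      rw [this, norm_mul, norm_cexpI, one_mul]
    rw [h1]
    exact ne_of_gt (lt_of_lt_of_le (by linarith)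
      (norm_cexpI_sub_pos ⟨hR0, hR1⟩ _ (norm_cexpI _)))
  simp only [deriv_circleMap, hw, hcm, norm_smul, norm_mul, norm_inv, Complex.norm_I,
    norm_cexpI, Complex.norm_real, Real.norm_eq_abs, _root_.abs_of_nonneg hR0.le, mul_one]
  have hpos' : ‖cexpI t - ↑R * cexpI θ‖ ≠ 0 := by
    exact hpos
  field_simp
  rw [show (↑R * cexpI t - (↑(R^2):ℂ) * cexpI θ) = (R:ℂ) * (cexpI t - ↑R * cexpI θ) by
    push_cast; ring, norm_mul, Complex.norm_real, Real.norm_eq_abs, _root_.abs_of_nonneg hR0.le]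
  field_simp

lemma continuous_cexpI : Continuous cexpI := by
  unfold cexpI
  fun_prop

lemma norm_rot {R : ℝ} (t θ : ℝ) :
    ‖cexpI t - (R:ℂ) * cexpI θ‖ = ‖cexpI (t - θ) - (R:ℂ)‖ := by
  have h2 : cexpI θ * cexpI (t - θ) = cexpI t := by
    simp only [cexpI]; rw [← Complex.exp_add]; push_cast; ring_nf
  have : cexpI t - (R:ℂ) * cexpI θ = cexpI θ * (cexpI (t - θ) - (R:ℂ)) := by
    rw [mul_sub, h2]; ring
  rw [this, norm_mul, norm_cexpI, one_mul]

lemma norm_diff_lb {R : ℝ} (hR : R ∈ Set.Ioo (0:ℝ) 1) (t θ : ℝ) :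
    1 - R ≤ ‖cexpI t - (R:ℂ) * cexpI θ‖ := by
  rw [norm_rot]
  exact norm_cexpI_sub_pos hR _ (norm_cexpI _)

lemma memLp_of_continuous {g : ℝ → ℝ} (hg : Continuous g) (p : ENNReal) :
    MeasureTheory.MemLp g p (volume.restrict (Set.Ioc (0:ℝ) (2*π))) := by
  haveI : IsFiniteMeasure (volume.restrict (Set.Ioc (0:ℝ) (2*π))) :=
    ⟨by rw [Measure.restrict_apply_univ]; exact measure_Ioc_lt_top⟩
  obtain ⟨C, hC⟩ := (isCompact_Icc (a := (0:ℝ)) (b := 2*π)).exists_bound_of_continuousOn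
    hg.continuousOn
  apply MeasureTheory.MemLp.of_bound hg.aestronglyMeasurable C
  filter_upwards [ae_restrict_mem measurableSet_Ioc] with x hx
  exact hC x (Set.Ioc_subset_Icc_self hx)

/-- The `p`-th integral mean of `f` on the circle of radius `r`. -/
noncomputable def Mp (p : ℝ) (f : ℂ → ℂ) (r : ℝ) : ℝ :=
  ((2 * Real.pi)⁻¹ * ∫ θ in (0 : ℝ)..(2 * Real.pi),
    ‖f ((r : ℂ) * Complex.exp (θ * Complex.I))‖ ^ p) ^ (1 / p)

/-- Lemma A (second estimate), dimension one: `M_s(f, R²) ≤ c (1-R)^{1/s-1} M_1(f, R)`. -/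
theorem Ms_from_M1_estimate (s : ℝ) (hs : 1 < s) :
    ∃ c : ℝ, 0 < c ∧ ∀ f : ℂ → ℂ, AnalyticOn ℂ f (Metric.ball 0 1) →
      ∀ R ∈ Set.Ioo (0 : ℝ) 1,
        Mp s f (R ^ 2) ≤ c * (1 - R) ^ (1 / s - 1) * Mp 1 f R := by
  have hπ := Real.pi_pos
  have hs0 : (0:ℝ) < s := by linarith
  have hs1 : s - 1 ≠ 0 := by intro hcon; rw [sub_eq_zero] at hcon; linarith
  have hsne : s ≠ 0 := ne_of_gt hs0
  have h6pos : (0:ℝ) < (6:ℝ)^s := Real.rpow_pos_of_pos (by norm_num) s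
  have hcpos : (0:ℝ) < (2*π)⁻¹ * (2 * 6^s / (s-1)) :=
    mul_pos (by positivity) (div_pos (by positivity) (by linarith))
  refine ⟨((2*π)⁻¹ * (2 * 6^s / (s-1))) ^ (1/s), Real.rpow_pos_of_pos hcpos _, ?_⟩
  intro f hf R hR
  obtain ⟨hR0, hR1⟩ := hR
  have hA0 : (0:ℝ) < 1 - R := by linarith
  set μ := volume.restrict (Set.Ioc (0:ℝ) (2*π)) with hμ
  set h : ℝ → ℝ := fun t => ‖f ((R:ℂ) * cexpI t)‖ with hh
  set k : ℝ → ℝ → ℝ := fun θ t => ‖cexpI t - (R:ℂ) * cexpI θ‖⁻¹ with hk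
  set h2 : ℝ → ℝ := fun θ => ‖f ((↑(R^2):ℂ) * cexpI θ)‖ with hh2
  set I1 : ℝ := ∫ t, h t ∂μ with hI1def
  set Km : ℝ := 2 * 6^s / (s-1) * (1-R) ^ (1-s) with hKm
  have hI1 : 0 ≤ I1 := MeasureTheory.integral_nonneg (fun t => norm_nonneg _)
  -- continuity of h
  have hcont_h : Continuous h := by
    apply Continuous.norm
    apply hf.continuousOn.comp_continuous
    · exact continuous_const.mul continuous_cexpI
    · intro t
      rw [Metric.mem_ball, dist_zero_right, norm_mul, norm_cexpI, mul_one,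
        Complex.norm_real, Real.norm_eq_abs, _root_.abs_of_nonneg hR0.le]
      exact hR1
  -- positivity and continuity of the kernel
  have hkpos : ∀ θ t, 0 < ‖cexpI t - (R:ℂ) * cexpI θ‖ := fun θ t =>
    lt_of_lt_of_le hA0 (norm_diff_lb ⟨hR0, hR1⟩ t θ)
  have hcont_k : Continuous (fun p : ℝ × ℝ => k p.1 p.2 ^ s) := by
    apply Continuous.rpow_const _ (fun x => Or.inr hs0.le)
    apply Continuous.inv₀
    · apply Continuous.norm
      exact (continuous_cexpI.comp continuous_snd).sub
        (continuous_const.mul (continuous_cexpI.comp continuous_fst))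
    · exact fun p => ne_of_gt (hkpos p.1 p.2)
  -- Mp 1 f R
  have hM1 : Mp 1 f R = (2*π)⁻¹ * I1 := by
    rw [Mp, hI1def, hh]
    simp only [cexpI, Real.rpow_one]
    rw [intervalIntegral.integral_of_le (by linarith), ← hμ]
    norm_num
  -- Mp s f (R^2)
  set X2 : ℝ := ∫ θ, h2 θ ^ s ∂μ with hX2def
  have hMs : Mp s f (R^2) = ((2*π)⁻¹ * X2) ^ (1/s) := by
    rw [Mp, hX2def, hh2]
    simp only [cexpI]
    rw [intervalIntegral.integral_of_le (by linarith), ← hμ]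
  -- conjugate exponents
  have hpq : ((s/(s-1)) : ℝ).HolderConjugate s := by
    rw [Real.holderConjugate_iff]
    constructor
    · rw [lt_div_iff₀ (by linarith)]; linarith
    · rw [show (s/(s-1))⁻¹ = (s-1)/s by rw [inv_div]]
      field_simp
      ring
  -- Hölder + Cauchy pointwise bound
  have claim1 : ∀ θ : ℝ, h2 θ ^ s
      ≤ (2*π)⁻¹ ^ s * (I1 ^ (s-1) * ∫ t, h t * k θ t ^ s ∂μ) := by
    intro θ
    set Y : ℝ := ∫ t, h t * k θ t ^ s ∂μ with hYdef
    have hY : 0 ≤ Y := MeasureTheory.integral_nonneg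
      (fun t => mul_nonneg (norm_nonneg _) (Real.rpow_nonneg (inv_nonneg.2 (norm_nonneg _)) s))
    have hc : 2*π * h2 θ ≤ ∫ t, h t * k θ t ∂μ := by
      rw [hμ, ← intervalIntegral.integral_of_le (by linarith)]
      exact cauchy_bound hf ⟨hR0, hR1⟩ θ
    have hXθ : 0 ≤ ∫ t, h t * k θ t ∂μ :=
      MeasureTheory.integral_nonneg
        (fun t => mul_nonneg (norm_nonneg _) (inv_nonneg.2 (norm_nonneg _)))
    -- Hölder
    have hold : (∫ t, h t * k θ t ∂μ) ≤ I1 ^ ((s-1)/s) * Y ^ (1/s) := by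
      have hf1 : Continuous (fun t => h t ^ ((s-1)/s)) :=
        hcont_h.rpow_const (fun x => Or.inr (div_nonneg (by linarith) hs0.le))
      have hg1 : Continuous (fun t => h t ^ (1/s) * k θ t) := by
        apply (hcont_h.rpow_const (fun x => Or.inr (by positivity))).mul
        apply Continuous.inv₀
        · exact (continuous_cexpI.sub continuous_const).norm
        · exact fun t => ne_of_gt (hkpos θ t)
      have hHo := MeasureTheory.integral_mul_le_Lp_mul_Lq_of_nonneg hpq
        (μ := μ) (f := fun t => h t ^ ((s-1)/s)) (g := fun t => h t ^ (1/s) * k θ t)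
        (Filter.Eventually.of_forall (fun t => Real.rpow_nonneg (norm_nonneg _) _))
        (Filter.Eventually.of_forall (fun t => mul_nonneg (Real.rpow_nonneg (norm_nonneg _) _)
          (inv_nonneg.2 (norm_nonneg _))))
        (memLp_of_continuous hf1 _) (memLp_of_continuous hg1 _)
      have e1 : (∫ t, (h t ^ ((s-1)/s)) * (h t ^ (1/s) * k θ t) ∂μ)
          = ∫ t, h t * k θ t ∂μ := by
        apply MeasureTheory.integral_congr_ae
        apply Filter.Eventually.of_forall
        intro t
        show h t ^ ((s-1)/s) * (h t ^ (1/s) * k θ t) = h t * k θ t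
        rw [← mul_assoc, ← Real.rpow_add' (norm_nonneg _) (by rw [← add_div, sub_add_cancel, div_self hsne]; norm_num),
          show (s-1)/s + 1/s = 1 by field_simp; ring, Real.rpow_one]
      have e2 : (∫ t, (h t ^ ((s-1)/s)) ^ (s/(s-1)) ∂μ) = I1 := by
        apply MeasureTheory.integral_congr_ae
        apply Filter.Eventually.of_forall
        intro t
        show (h t ^ ((s-1)/s)) ^ (s/(s-1)) = h t
        rw [← Real.rpow_mul (norm_nonneg _), show (s-1)/s * (s/(s-1)) = 1 by
          field_simp, Real.rpow_one]
      have e3 : (∫ t, (h t ^ (1/s) * k θ t) ^ s ∂μ) = Y := by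
        apply MeasureTheory.integral_congr_ae
        apply Filter.Eventually.of_forall
        intro t
        show (h t ^ (1/s) * k θ t) ^ s = h t * k θ t ^ s
        rw [Real.mul_rpow (Real.rpow_nonneg (norm_nonneg _) _) (inv_nonneg.2 (norm_nonneg _)),
          ← Real.rpow_mul (norm_nonneg _), show 1/s * s = 1 by field_simp, Real.rpow_one]
      rw [e1, e2, e3] at hHo
      rwa [show 1/(s/(s-1)) = (s-1)/s by rw [one_div_div]] at hHo
    have hfinal : h2 θ ≤ (2*π)⁻¹ * (I1 ^ ((s-1)/s) * Y ^ (1/s)) := by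
      have h1 : h2 θ = (2*π)⁻¹ * (2*π * h2 θ) := by field_simp
      rw [h1]
      exact mul_le_mul_of_nonneg_left (hc.trans hold) (by positivity)
    calc h2 θ ^ s ≤ ((2*π)⁻¹ * (I1 ^ ((s-1)/s) * Y ^ (1/s))) ^ s :=
          Real.rpow_le_rpow (norm_nonneg _) hfinal hs0.le
      _ = (2*π)⁻¹ ^ s * (I1 ^ (s-1) * Y) := by
          have eA : ((2*π)⁻¹ * (I1 ^ ((s-1)/s) * Y ^ (1/s))) ^ s
              = (2*π)⁻¹ ^ s * ((I1 ^ ((s-1)/s)) ^ s * (Y ^ (1/s)) ^ s) := by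
            rw [Real.mul_rpow (by positivity) (mul_nonneg (Real.rpow_nonneg hI1 _)
              (Real.rpow_nonneg hY _)),
              Real.mul_rpow (Real.rpow_nonneg hI1 _) (Real.rpow_nonneg hY _)]
          have eB : (I1 ^ ((s-1)/s)) ^ s = I1 ^ (s-1) := by
            rw [← Real.rpow_mul hI1, show (s-1)/s * s = s - 1 by field_simp]
          have eC : (Y ^ (1/s)) ^ s = Y := by
            rw [← Real.rpow_mul hY, show 1/s * s = 1 by field_simp, Real.rpow_one]
          rw [eA, eB, eC]
  -- product integrability
  have hH : MeasureTheory.Integrable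
      (Function.uncurry (fun θ t => h t * k θ t ^ s)) (μ.prod μ) := by
    have hcontH : Continuous (Function.uncurry (fun θ t => h t * k θ t ^ s)) := by
      unfold Function.uncurry
      exact (hcont_h.comp continuous_snd).mul hcont_k
    rw [hμ, MeasureTheory.Measure.prod_restrict, ← MeasureTheory.Measure.volume_eq_prod]
    exact (hcontH.continuousOn.integrableOn_compact
      (isCompact_Icc.prod isCompact_Icc)).mono_set
      (Set.prod_mono Set.Ioc_subset_Icc_self Set.Ioc_subset_Icc_self)
  have hYint : MeasureTheory.Integrable (fun θ => ∫ t, h t * k θ t ^ s ∂μ) μ := by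
    have := hH.integral_prod_left
    simpa [Function.uncurry] using this
  -- Fubini and kernel bound
  have hswap : (∫ θ, (∫ t, h t * k θ t ^ s ∂μ) ∂μ) ≤ Km * I1 := by
    rw [MeasureTheory.integral_integral_swap hH]
    have inner_eq : ∀ t, (∫ θ, h t * k θ t ^ s ∂μ) = h t * ∫ θ, k θ t ^ s ∂μ := by
      intro t
      rw [MeasureTheory.integral_const_mul]
    have kern : ∀ t : ℝ, (∫ θ, k θ t ^ s ∂μ) ≤ Km := by
      intro t
      rw [hμ, ← intervalIntegral.integral_of_le (by linarith)]
      exact kernel_integral hs ⟨hR0, hR1⟩ t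
    have hKm0 : 0 ≤ Km := by
      rw [hKm]
      exact mul_nonneg (div_nonneg (by positivity) (by linarith)) (Real.rpow_nonneg hA0.le _)
    calc (∫ t, (∫ θ, h t * k θ t ^ s ∂μ) ∂μ) ≤ ∫ t, h t * Km ∂μ := by
          apply MeasureTheory.integral_mono_of_nonneg
          · apply Filter.Eventually.of_forall
            intro t
            exact MeasureTheory.integral_nonneg (fun θ => mul_nonneg (norm_nonneg _)
              (Real.rpow_nonneg (inv_nonneg.2 (norm_nonneg _)) s))
          · exact (hcont_h.mul continuous_const).integrableOn_Ioc.mono_measure le_rfl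
          · apply Filter.Eventually.of_forall
            intro t
            show (∫ θ, h t * k θ t ^ s ∂μ) ≤ h t * Km
            rw [inner_eq t]
            exact mul_le_mul_of_nonneg_left (kern t) (norm_nonneg _)
      _ = Km * I1 := by
          rw [MeasureTheory.integral_mul_const, hI1def, mul_comm]
  -- put everything together
  have hX2 : 0 ≤ X2 := MeasureTheory.integral_nonneg
    (fun θ => Real.rpow_nonneg (norm_nonneg _) s)
  have hbig : X2 ≤ (2*π)⁻¹ ^ s * (I1 ^ (s-1) * (Km * I1)) := by
    calc X2 ≤ ∫ θ, (2*π)⁻¹ ^ s * (I1 ^ (s-1) * ∫ t, h t * k θ t ^ s ∂μ) ∂μ := by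
          apply MeasureTheory.integral_mono_of_nonneg
          · exact Filter.Eventually.of_forall (fun θ => Real.rpow_nonneg (norm_nonneg _) s)
          · exact (hYint.const_mul _).const_mul _
          · exact Filter.Eventually.of_forall claim1
      _ = (2*π)⁻¹ ^ s * (I1 ^ (s-1) * ∫ θ, (∫ t, h t * k θ t ^ s ∂μ) ∂μ) := by
          rw [MeasureTheory.integral_const_mul, MeasureTheory.integral_const_mul]
      _ ≤ (2*π)⁻¹ ^ s * (I1 ^ (s-1) * (Km * I1)) := by
          apply mul_le_mul_of_nonneg_left _ (by positivity)
          exact mul_le_mul_of_nonneg_left hswap (Real.rpow_nonneg hI1 _)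
  -- final algebra
  rw [hMs, hM1]
  have hc0s : (((2*π)⁻¹ * (2 * 6^s / (s-1))) ^ ((1:ℝ)/s)) ^ s
      = (2*π)⁻¹ * (2 * 6^s / (s-1)) := by
    rw [← Real.rpow_mul hcpos.le, show 1/s * s = 1 by field_simp, Real.rpow_one]
  have hAs : ((1-R) ^ ((1:ℝ)/s - 1)) ^ s = (1-R) ^ (1 - s) := by
    rw [← Real.rpow_mul hA0.le, show (1/s - 1) * s = 1 - s by field_simp]
  have hc0nn : (0:ℝ) ≤ ((2*π)⁻¹ * (2 * 6^s / (s-1))) ^ ((1:ℝ)/s) :=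
    Real.rpow_nonneg hcpos.le _
  have hRHS0 : 0 ≤ ((2*π)⁻¹ * (2 * 6^s / (s-1))) ^ ((1:ℝ)/s)
      * (1-R) ^ ((1:ℝ)/s - 1) * ((2*π)⁻¹ * I1) := by
    apply mul_nonneg (mul_nonneg hc0nn (Real.rpow_nonneg hA0.le _))
    positivity
  have hkey : (2*π)⁻¹ * X2 ≤ (((2*π)⁻¹ * (2 * 6^s / (s-1))) ^ ((1:ℝ)/s)
      * (1-R) ^ ((1:ℝ)/s - 1) * ((2*π)⁻¹ * I1)) ^ s := by
    have hexp : (((2*π)⁻¹ * (2 * 6^s / (s-1))) ^ ((1:ℝ)/s)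
        * (1-R) ^ ((1:ℝ)/s - 1) * ((2*π)⁻¹ * I1)) ^ s
        = ((2*π)⁻¹ * (2 * 6^s / (s-1))) * (1-R) ^ (1 - s) * ((2*π)⁻¹ ^ s * I1 ^ s) := by
      rw [Real.mul_rpow (mul_nonneg hc0nn (Real.rpow_nonneg hA0.le _)) (by positivity),
        Real.mul_rpow hc0nn (Real.rpow_nonneg hA0.le _),
        Real.mul_rpow (by positivity) hI1, hc0s, hAs]
    rw [hexp]
    have hI1s : I1 ^ (s-1) * I1 = I1 ^ s := by
      nth_rewrite 2 [← Real.rpow_one I1]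
      rw [← Real.rpow_add' hI1 (by rw [sub_add_cancel]; exact hsne), sub_add_cancel]
    calc (2*π)⁻¹ * X2 ≤ (2*π)⁻¹ * ((2*π)⁻¹ ^ s * (I1 ^ (s-1) * (Km * I1))) :=
          mul_le_mul_of_nonneg_left hbig (by positivity)
      _ = ((2*π)⁻¹ * (2 * 6^s / (s-1))) * (1-R) ^ (1 - s) * ((2*π)⁻¹ ^ s * I1 ^ s) := by
          rw [hKm, ← hI1s]; ring
  calc ((2*π)⁻¹ * X2) ^ ((1:ℝ)/s)
      ≤ ((((2*π)⁻¹ * (2 * 6^s / (s-1))) ^ ((1:ℝ)/s)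
          * (1-R) ^ ((1:ℝ)/s - 1) * ((2*π)⁻¹ * I1)) ^ s) ^ ((1:ℝ)/s) :=
        Real.rpow_le_rpow (by positivity) hkey (by positivity)
    _ = ((2*π)⁻¹ * (2 * 6^s / (s-1))) ^ ((1:ℝ)/s)
          * (1-R) ^ ((1:ℝ)/s - 1) * ((2*π)⁻¹ * I1) := by
        rw [← Real.rpow_mul hRHS0, show s * (1/s) = 1 by field_simp, Real.rpow_one]
end

section
/- Let 0 < p ≤ s < ∞, α > 0, and let f be analytic in the unit disk D. Then there is a constant c > 0 independent of f such that (∫_D |f(w)|^s (1 - |w|)^{s(α + 1/p) - 2} dA(w))^{1/s} ≤ c (∫_0^{2π} (∫_0^1 |f(r e^{iθ})|^p (1 - r)^{αp - 1} dr)^{1} dθ/(2π))^{1/p}, i.e. the A^s Bergman-type norm with weight (1-|w|)^{s(α+1/p)-2} is dominated by the F^{p,p}_α norm. -/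
open MeasureTheory Metric Set Real
open scoped ENNReal

/-- complement of slitPlane is null -/
lemma slitPlane_compl_null : volume (Complex.slitPlaneᶜ) = 0 := by
  have hsub : Complex.slitPlaneᶜ ⊆ Complex.measurableEquivRealProd ⁻¹' ((univ : Set ℝ) ×ˢ ({0} : Set ℝ)) := by
    intro w hw
    simp only [Set.mem_compl_iff, Complex.mem_slitPlane_iff, not_or, not_lt, not_ne_iff] at hw
    simp [Complex.measurableEquivRealProd_apply, hw.2]
  refine measure_mono_null hsub ?_
  have h := Complex.volume_preserving_equiv_real_prod.measure_preimage
    (s := (univ : Set ℝ) ×ˢ ({0} : Set ℝ)) (MeasurableSet.univ.prod (measurableSet_singleton 0)).nullMeasurableSet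
  rw [h, Measure.volume_eq_prod, Measure.prod_prod]
  simp

/-- image of the polar rectangle -/
lemma polar_image (R : ℝ) :
    Complex.polarCoord.symm '' (Ioo (0:ℝ) R ×ˢ Ioo (-π) π) = ball (0:ℂ) R ∩ Complex.slitPlane := by
  ext w
  constructor
  · rintro ⟨⟨r, θ⟩, ⟨⟨hr0, hrR⟩, hθ⟩, rfl⟩
    have hmem : (r, θ) ∈ Complex.polarCoord.target := by
      rw [Complex.polarCoord_target]
      exact ⟨hr0, hθ⟩
    refine ⟨?_, ?_⟩
    · rw [mem_ball_zero_iff, Complex.norm_polarCoord_symm]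
      simpa [abs_of_pos hr0] using hrR
    · exact Complex.polarCoord.map_target hmem
  · rintro ⟨hball, hslit⟩
    have hsrc : w ∈ Complex.polarCoord.source := hslit
    refine ⟨Complex.polarCoord w, ?_, Complex.polarCoord.left_inv hsrc⟩
    have htgt := Complex.polarCoord.map_source hsrc
    rw [Complex.polarCoord_target] at htgt
    rw [Complex.polarCoord_apply] at htgt ⊢
    refine ⟨⟨htgt.1, ?_⟩, htgt.2⟩
    · rw [mem_ball_zero_iff] at hball
      exact hball

/-- polar coordinates for lintegral over a ball centered anywhere -/
theorem lintegral_ball_polar (g : ℂ → ℝ≥0∞) (z : ℂ) (R : ℝ) :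
    ∫⁻ w in ball z R, g w
      = ∫⁻ q in Ioo (0:ℝ) R ×ˢ Ioo (-π) π,
          ENNReal.ofReal q.1 * g (z + ↑q.1 * Complex.exp (↑q.2 * Complex.I)) := by
  have hsymm : ∀ q : ℝ × ℝ, Complex.polarCoord.symm q = ↑q.1 * Complex.exp (↑q.2 * Complex.I) := by
    intro q
    rw [Complex.polarCoord_symm_apply, Complex.exp_mul_I]
    push_cast
    ring
  set s : Set (ℝ × ℝ) := Ioo (0:ℝ) R ×ˢ Ioo (-π) π with hs_def
  have hs : MeasurableSet s := measurableSet_Ioo.prod measurableSet_Ioo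
  set B : ℝ × ℝ → ℝ × ℝ →L[ℝ] ℝ × ℝ := fun p =>
    LinearMap.toContinuousLinearMap (Matrix.toLin (Module.Basis.finTwoProd ℝ) (Module.Basis.finTwoProd ℝ)
      !![Real.cos p.2, -p.1 * Real.sin p.2; Real.sin p.2, p.1 * Real.cos p.2]) with hB
  set ψ : ℝ × ℝ → ℝ × ℝ := fun q => (z.re, z.im) + polarCoord.symm q with hψ
  have hderiv : ∀ q ∈ s, HasFDerivWithinAt ψ (B q) s q := by
    intro q _
    exact ((hasFDerivAt_polarCoord_symm q).const_add (z.re, z.im)).hasFDerivWithinAt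
  have hBdet : ∀ p, (B p).det = p.1 := by
    intro p
    conv_rhs => rw [← one_mul p.1, ← Real.cos_sq_add_sin_sq p.2]
    simp only [hB, neg_mul, LinearMap.det_toContinuousLinearMap, LinearMap.det_toLin,
      Matrix.det_fin_two_of, sub_neg_eq_add]
    ring
  have hinj : Set.InjOn ψ s := by
    have h1 : Set.InjOn polarCoord.symm polarCoord.target := polarCoord.symm.injOn
    have h2 : s ⊆ polarCoord.target := by
      rintro ⟨r, θ⟩ ⟨hr, hθ⟩
      exact ⟨hr.1, hθ⟩
    intro a ha b hb hab
    apply h1 (h2 ha) (h2 hb)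
    exact add_right_injective _ hab
  have himg : (fun v => z + v) '' (ball (0:ℂ) R) = ball z R := by
    ext w
    constructor
    · rintro ⟨v, hv, rfl⟩
      rw [mem_ball_zero_iff] at hv
      rw [mem_ball, dist_eq_norm]
      simpa using hv
    · intro hw
      rw [mem_ball, dist_eq_norm] at hw
      exact ⟨w - z, by rwa [mem_ball_zero_iff], by ring⟩
  have hsub : (fun v => z + v) '' (ball (0:ℂ) R ∩ Complex.slitPlane) ⊆ ball z R := by
    rw [← himg]; exact Set.image_mono Set.inter_subset_left
  have hdiff : ball z R \ (fun v => z + v) '' (ball (0:ℂ) R ∩ Complex.slitPlane)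
      ⊆ (fun v => z + v) '' Complex.slitPlaneᶜ := by
    rw [← himg]
    rintro w ⟨⟨v, hv, rfl⟩, hw2⟩
    exact ⟨v, fun hvs => hw2 ⟨v, ⟨hv, hvs⟩, rfl⟩, rfl⟩
  have hnull : volume ((fun v : ℂ => z + v) '' Complex.slitPlaneᶜ) = 0 := by
    have heq : (fun v : ℂ => z + v) '' Complex.slitPlaneᶜ
        = (fun w : ℂ => w - z) ⁻¹' Complex.slitPlaneᶜ := by
      ext w
      constructor
      · rintro ⟨v, hv, rfl⟩; simpa using hv
      · intro hw; exact ⟨w - z, hw, by ring⟩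
    rw [heq]
    have hmp : MeasurePreserving (fun w : ℂ => w - z) volume volume :=
      measurePreserving_sub_right volume z
    rw [hmp.measure_preimage
      (Complex.isOpen_slitPlane.measurableSet.compl.nullMeasurableSet)]
    exact slitPlane_compl_null
  have haeeq : ball z R =ᵐ[volume] (fun v => z + v) '' (ball (0:ℂ) R ∩ Complex.slitPlane) := by
    rw [MeasureTheory.ae_eq_set]
    constructor
    · exact measure_mono_null hdiff hnull
    · rw [Set.diff_eq_empty.2 hsub]; simp
  calc ∫⁻ w in ball z R, g w
      = ∫⁻ w in (fun v => z + v) '' (ball (0:ℂ) R ∩ Complex.slitPlane), g w :=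
        setLIntegral_congr haeeq
    _ = ∫⁻ x in ψ '' s, g (Complex.measurableEquivRealProd.symm x) := by
        rw [(Complex.volume_preserving_equiv_real_prod.symm).setLIntegral_comp_emb
          (MeasurableEquiv.measurableEmbedding _) g (ψ '' s)]
        congr 1
        rw [← Set.image_comp]
        have hcomp : (Complex.measurableEquivRealProd.symm ∘ ψ)
            = (fun v => z + v) ∘ Complex.polarCoord.symm := by
          funext q
          simp only [Function.comp_apply, hψ]
          apply Complex.ext <;>
            simp [Complex.measurableEquivRealProd_symm_apply, Complex.polarCoord_symm_apply,
              polarCoord_symm_apply, Complex.cos_ofReal_re, Complex.sin_ofReal_re]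
        rw [hcomp, Set.image_comp, polar_image]
    _ = ∫⁻ q in s, ENNReal.ofReal |(B q).det| * g (Complex.measurableEquivRealProd.symm (ψ q)) :=
        lintegral_image_eq_lintegral_abs_det_fderiv_mul volume hs hderiv hinj _
    _ = ∫⁻ q in Ioo (0:ℝ) R ×ˢ Ioo (-π) π,
          ENNReal.ofReal q.1 * g (z + ↑q.1 * Complex.exp (↑q.2 * Complex.I)) := by
        apply setLIntegral_congr_fun hs
        rintro ⟨r, θ⟩ ⟨hr, hθ⟩
        have hre : Complex.measurableEquivRealProd.symm (ψ (r, θ))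
            = z + Complex.polarCoord.symm (r, θ) := by
          apply Complex.ext <;>
            simp [hψ, Complex.measurableEquivRealProd_symm_apply, Complex.polarCoord_symm_apply,
              polarCoord_symm_apply, Complex.cos_ofReal_re, Complex.sin_ofReal_re]
        beta_reduce
        rw [hBdet, abs_of_pos hr.1, hre, hsymm]

lemma circle_mvp {f : ℂ → ℂ} (hf : AnalyticOn ℂ f (ball 0 1)) {z : ℂ} {r : ℝ}
    (hr : 0 < r) (hsub : closedBall z r ⊆ ball 0 1) :
    ENNReal.ofReal (2 * π * ‖f z‖)
      ≤ ∫⁻ θ in Ioo (-π) π, ENNReal.ofReal ‖f (z + ↑r * Complex.exp (↑θ * Complex.I))‖ := by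
  have hd : DifferentiableOn ℂ f (closedBall z r) := hf.differentiableOn.mono hsub
  have hcauchy := hd.circleIntegral_sub_inv_smul (mem_ball_self hr)
  set g : ℝ → ℝ := fun θ => ‖f (circleMap z r θ)‖ with hg
  have hcont : Continuous g := by
    rw [continuous_iff_continuousAt]
    intro θ
    have hmem : circleMap z r θ ∈ ball (0:ℂ) 1 :=
      hsub (by simpa using circleMap_mem_closedBall z hr.le θ)
    exact (continuous_norm.continuousAt).comp
      ((hf.continuousOn.continuousAt (isOpen_ball.mem_nhds hmem)).comp
        (continuous_circleMap z r).continuousAt)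
  have key : 2 * π * ‖f z‖ ≤ ∫ θ in (0:ℝ)..(2*π), g θ := by
    have h1 : ‖(2 * ↑π * Complex.I : ℂ) • f z‖ = 2 * π * ‖f z‖ := by
      rw [norm_smul]
      simp [Real.pi_pos.le, abs_of_nonneg]
    rw [← h1, ← hcauchy]
    have h2 : ∀ θ : ℝ, ‖deriv (circleMap z r) θ • (circleMap z r θ - z)⁻¹ • f (circleMap z r θ)‖
        = g θ := by
      intro θ
      rw [deriv_circleMap, norm_smul, norm_smul, circleMap_sub_center, norm_inv]
      have h3 : ‖circleMap 0 r θ * Complex.I‖ = r := by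
        simp [abs_of_pos hr]
      have h4 : ‖circleMap 0 r θ‖ = r := by simp [abs_of_pos hr]
      rw [h3, h4]
      rw [hg]
      field_simp
    calc ‖∮ w in C(z, r), (w - z)⁻¹ • f w‖
        ≤ ∫ θ in (0:ℝ)..(2*π), ‖deriv (circleMap z r) θ • (circleMap z r θ - z)⁻¹ • f (circleMap z r θ)‖ :=
          intervalIntegral.norm_integral_le_integral_norm (by positivity)
      _ = ∫ θ in (0:ℝ)..(2*π), g θ := by simp_rw [h2]
  have hper : Function.Periodic g (2 * π) := fun θ => by
    simp only [hg, periodic_circleMap z r θ]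
  have hshift : ∫ θ in (0:ℝ)..(2*π), g θ = ∫ θ in (-π)..π, g θ := by
    have h := hper.intervalIntegral_add_eq 0 (-π)
    rw [zero_add] at h
    rw [h]
    congr 1
    ring
  have hIoc : ∫ θ in (-π)..π, g θ = ∫ θ in Ioc (-π) π, g θ :=
    intervalIntegral.integral_of_le (by linarith [Real.pi_pos])
  have hlint : ENNReal.ofReal (∫ θ in Ioc (-π) π, g θ)
      = ∫⁻ θ in Ioc (-π) π, ENNReal.ofReal (g θ) := by
    apply MeasureTheory.ofReal_integral_eq_lintegral_ofReal
    · exact (hcont.integrableOn_Icc (a := -π) (b := π)).mono_set Ioc_subset_Icc_self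
    · exact Filter.Eventually.of_forall fun θ => norm_nonneg _
  have hfinal : ∫⁻ θ in Ioc (-π) π, ENNReal.ofReal (g θ)
      = ∫⁻ θ in Ioo (-π) π, ENNReal.ofReal ‖f (z + ↑r * Complex.exp (↑θ * Complex.I))‖ := by
    rw [← setLIntegral_congr (Ioo_ae_eq_Ioc (a := -π) (b := π))]
    apply setLIntegral_congr_fun measurableSet_Ioo
    intro θ _
    rw [hg]
    rfl
  calc ENNReal.ofReal (2 * π * ‖f z‖)
      ≤ ENNReal.ofReal (∫ θ in Ioc (-π) π, g θ) := by
        apply ENNReal.ofReal_le_ofReal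
        rw [← hIoc, ← hshift]
        exact key
    _ = ∫⁻ θ in Ioc (-π) π, ENNReal.ofReal (g θ) := hlint
    _ = _ := hfinal

lemma lintegral_rect {A B : Set ℝ} (hA : MeasurableSet A) (hB : MeasurableSet B)
    {F : ℝ × ℝ → ℝ≥0∞} (hF : AEMeasurable F (volume.restrict (A ×ˢ B))) :
    ∫⁻ q in A ×ˢ B, F q = ∫⁻ x in A, ∫⁻ y in B, F (x, y) := by
  have h1 : (volume : Measure (ℝ × ℝ)).restrict (A ×ˢ B)
      = (volume.restrict A).prod (volume.restrict B) := by
    rw [Measure.volume_eq_prod, Measure.prod_restrict]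
  rw [h1] at hF ⊢
  exact lintegral_prod _ hF

lemma area_mvp {f : ℂ → ℂ} (hf : AnalyticOn ℂ f (ball 0 1)) {z : ℂ} {ρ : ℝ}
    (hρ : 0 < ρ) (hsub : closedBall z ρ ⊆ ball 0 1) :
    ENNReal.ofReal (π / 2 * ρ^2 * ‖f z‖) ≤ ∫⁻ w in ball z ρ, ENNReal.ofReal ‖f w‖ := by
  rw [lintegral_ball_polar (fun w => ENNReal.ofReal ‖f w‖) z ρ]
  set F : ℝ × ℝ → ℝ≥0∞ := fun q =>
    ENNReal.ofReal q.1 * ENNReal.ofReal ‖f (z + ↑q.1 * Complex.exp (↑q.2 * Complex.I))‖ with hF_def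
  have hmono : ∫⁻ q in Ioo (ρ/2) ρ ×ˢ Ioo (-π) π, F q ≤ ∫⁻ q in Ioo 0 ρ ×ˢ Ioo (-π) π, F q :=
    lintegral_mono_set (Set.prod_mono_left (Ioo_subset_Ioo (by linarith) le_rfl))
  refine le_trans ?_ hmono
  have hmapsto : ∀ q : ℝ × ℝ, q ∈ Ioo (ρ/2) ρ ×ˢ Ioo (-π) π →
      z + ↑q.1 * Complex.exp (↑q.2 * Complex.I) ∈ ball (0:ℂ) 1 := by
    rintro ⟨r, θ⟩ ⟨hr, _⟩
    apply hsub
    rw [mem_closedBall, dist_eq_norm]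
    have : ‖z + ↑r * Complex.exp (↑θ * Complex.I) - z‖ = |r| := by
      rw [add_sub_cancel_left, norm_mul, Complex.norm_exp_ofReal_mul_I]
      simp
    rw [this, abs_of_pos (lt_trans (by linarith) hr.1)]
    exact hr.2.le
  have hcontF : AEMeasurable F (volume.restrict (Ioo (ρ/2) ρ ×ˢ Ioo (-π) π)) := by
    have h2 : AEMeasurable (fun q : ℝ × ℝ => ‖f (z + ↑q.1 * Complex.exp (↑q.2 * Complex.I))‖)
        (volume.restrict (Ioo (ρ/2) ρ ×ˢ Ioo (-π) π)) := by
      apply ContinuousOn.aemeasurable ?_ (measurableSet_Ioo.prod measurableSet_Ioo)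
      apply continuous_norm.comp_continuousOn
      apply hf.continuousOn.comp ?_ hmapsto
      apply Continuous.continuousOn
      continuity
    exact (measurable_fst.ennreal_ofReal.aemeasurable).mul h2.ennreal_ofReal
  rw [lintegral_rect measurableSet_Ioo measurableSet_Ioo hcontF]
  have hinner : ∀ r ∈ Ioo (ρ/2) ρ,
      ENNReal.ofReal (ρ/2) * ENNReal.ofReal (2 * π * ‖f z‖) ≤ ∫⁻ y in Ioo (-π) π, F (r, y) := by
    intro r hr
    have hr0 : 0 < r := lt_trans (by linarith) hr.1
    have hsub' : closedBall z r ⊆ ball (0:ℂ) 1 :=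
      subset_trans (closedBall_subset_closedBall hr.2.le) hsub
    calc ENNReal.ofReal (ρ/2) * ENNReal.ofReal (2 * π * ‖f z‖)
        ≤ ENNReal.ofReal r * ∫⁻ θ in Ioo (-π) π,
            ENNReal.ofReal ‖f (z + ↑r * Complex.exp (↑θ * Complex.I))‖ := by
          apply mul_le_mul' (ENNReal.ofReal_le_ofReal hr.1.le) (circle_mvp hf hr0 hsub')
      _ = ∫⁻ θ in Ioo (-π) π, F (r, θ) := by
          rw [← lintegral_const_mul' _ _ ENNReal.ofReal_ne_top]
  calc ENNReal.ofReal (π / 2 * ρ^2 * ‖f z‖)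
      = ENNReal.ofReal (ρ/2) * ENNReal.ofReal (2 * π * ‖f z‖) * volume (Ioo (ρ/2) ρ) := by
        rw [Real.volume_Ioo, ← ENNReal.ofReal_mul (by positivity), ← ENNReal.ofReal_mul (by positivity)]
        congr 1
        ring_nf
    _ = ∫⁻ _ in Ioo (ρ/2) ρ, ENNReal.ofReal (ρ/2) * ENNReal.ofReal (2 * π * ‖f z‖) := by
        rw [setLIntegral_const]
    _ ≤ ∫⁻ x in Ioo (ρ/2) ρ, ∫⁻ y in Ioo (-π) π, F (x, y) :=
        lintegral_mono_ae ((ae_restrict_iff' measurableSet_Ioo).2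
          (Filter.Eventually.of_forall hinner))

noncomputable def smvConst (p : ℝ) : ℝ :=
  if p ≤ 1 then 8 * 2 ^ (2*(1-p)/p) / π else (π/2) ^ (-p) * 4 ^ (p-1)

lemma smvConst_pos {p : ℝ} (hp : 0 < p) : 0 < smvConst p := by
  unfold smvConst
  split_ifs
  · have := Real.rpow_pos_of_pos (by norm_num : (0:ℝ) < 2) (2*(1-p)/p)
    have := Real.pi_pos
    positivity
  · have h1 := Real.rpow_pos_of_pos (by positivity : (0:ℝ) < π/2) (-p)
    have h2 := Real.rpow_pos_of_pos (by norm_num : (0:ℝ) < 4) (p-1)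
    positivity

lemma rpow_magic {p u Δ : ℝ} (hp : 0 < p) (hu : 0 < u) (hΔ : 0 < Δ) :
    u ^ (2/p) * (2 / (π * ((u*Δ/2)^2)) * ((u/2) ^ (-(2/p))) ^ (1-p))
      = 8 * 2 ^ (2*(1-p)/p) / (π * Δ^2) := by
  have h2 : (0:ℝ) < 2 := by norm_num
  have hπ := Real.pi_pos
  rw [Real.div_rpow hu.le h2.le, Real.div_rpow (Real.rpow_nonneg hu.le _)
    (Real.rpow_nonneg h2.le _), ← Real.rpow_mul hu.le, ← Real.rpow_mul h2.le,
    show (-(2/p) * (1-p)) = -(2*(1-p)/p) by ring, Real.rpow_neg h2.le, div_inv_eq_mul]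
  have hA : u ^ (2/p) * u ^ (-(2*(1-p)/p)) = u ^ 2 := by
    rw [← Real.rpow_add hu, show 2/p + -(2*(1-p)/p) = ((2:ℕ):ℝ) by push_cast; field_simp; ring,
      Real.rpow_natCast]
  have key : u ^ (2/p) * (2 / (π * ((u*Δ/2)^2)) * (u ^ (-(2*(1-p)/p)) * (2:ℝ) ^ (2*(1-p)/p)))
      = (u ^ (2/p) * u ^ (-(2*(1-p)/p))) * (2:ℝ) ^ (2*(1-p)/p) * 2 / (π * ((u*Δ/2)^2)) := by
    ring
  rw [key, hA]
  field_simp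
  ring

lemma smv {f : ℂ → ℂ} (hf : AnalyticOn ℂ f (ball 0 1)) {p : ℝ} (hp : 0 < p)
    {z : ℂ} {Δ : ℝ} (hΔ : 0 < Δ) (hsub : closedBall z Δ ⊆ ball 0 1) :
    ENNReal.ofReal (‖f z‖ ^ p * Δ ^ 2)
      ≤ ENNReal.ofReal (smvConst p) * ∫⁻ w in ball z Δ, ENNReal.ofReal (‖f w‖ ^ p) := by
  set I := ∫⁻ w in ball z Δ, ENNReal.ofReal (‖f w‖ ^ p) with hI
  -- a bound for ‖f‖ on the closed ball
  obtain ⟨Mb, hMb⟩ := (isCompact_closedBall z Δ).exists_bound_of_continuousOn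
    (hf.continuousOn.mono hsub)
  have hIfin : I ≠ ⊤ := by
    have hle : I ≤ ENNReal.ofReal (Mb ^ p) * volume (ball z Δ) := by
      rw [hI, ← setLIntegral_const (ball z Δ) (ENNReal.ofReal (Mb ^ p))]
      apply lintegral_mono_ae ((ae_restrict_iff' measurableSet_ball).2
        (Filter.Eventually.of_forall fun w hw => ?_))
      exact ENNReal.ofReal_le_ofReal
        (Real.rpow_le_rpow (norm_nonneg _) (hMb w (ball_subset_closedBall hw)) hp.le)
    exact ne_top_of_le_ne_top
      (ENNReal.mul_ne_top ENNReal.ofReal_ne_top measure_ball_lt_top.ne) hle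
  set J := I.toReal with hJ
  have hJ0 : 0 ≤ J := ENNReal.toReal_nonneg
  have hJle : ENNReal.ofReal J ≤ I := ENNReal.ofReal_toReal_le
  rcases le_or_gt p 1 with hp1 | hp1
  -- ========== case p ≤ 1 : absorption ==========
  · set M : ℝ → ℝ := fun t => sSup ((fun w => ‖f w‖) '' closedBall z (t*Δ)) with hM
    have hball_sub : ∀ {t : ℝ}, t ≤ 1 → closedBall z (t*Δ) ⊆ ball (0:ℂ) 1 := by
      intro t ht
      refine subset_trans (closedBall_subset_closedBall ?_) hsub
      nlinarith
    have hbdd : ∀ {t : ℝ}, t ≤ 1 → BddAbove ((fun w => ‖f w‖) '' closedBall z (t*Δ)) := by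
      intro t ht
      exact ((isCompact_closedBall z _).image_of_continuousOn
        ((hf.continuousOn.mono (hball_sub ht)).norm)).bddAbove
    have hMle : ∀ {t : ℝ}, 0 ≤ t → t ≤ 1 → ∀ w ∈ closedBall z (t*Δ), ‖f w‖ ≤ M t := by
      intro t ht0 ht1 w hw
      exact le_csSup (hbdd ht1) ⟨w, hw, rfl⟩
    have hzmem : ∀ {t : ℝ}, 0 ≤ t → z ∈ closedBall z (t*Δ) := by
      intro t ht; exact mem_closedBall_self (by positivity)
    have hM0 : ∀ {t : ℝ}, 0 ≤ t → t ≤ 1 → 0 ≤ M t := fun ht0 ht1 =>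
      le_trans (norm_nonneg _) (hMle ht0 ht1 z (hzmem ht0))
    have hkey : ∀ t, t ∈ Ico (0:ℝ) 1 → ∀ w ∈ closedBall z (t*Δ),
        π/2 * ((1-t)*Δ/2)^2 * ‖f w‖ ≤ M ((1+t)/2) ^ (1-p) * J := by
      intro t ht w hw
      set T := (1+t)/2 with hT
      set ρ := (1-t)*Δ/2 with hρdef
      have hT0 : (0:ℝ) ≤ T := by rw [hT]; linarith [ht.1]
      have hT1 : T < 1 := by rw [hT]; linarith [ht.2]
      have hu : 0 < 1 - t := by linarith [ht.2]
      have hρpos : 0 < ρ := by rw [hρdef]; positivity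
      have hcb : closedBall w ρ ⊆ closedBall z (T*Δ) := by
        intro v hv
        rw [mem_closedBall] at hv hw ⊢
        calc dist v z ≤ dist v w + dist w z := dist_triangle v w z
          _ ≤ ρ + t*Δ := add_le_add hv hw
          _ = T*Δ := by rw [hρdef, hT]; ring
      have hball1 : closedBall w ρ ⊆ ball (0:ℂ) 1 := by
        refine hcb.trans ?_
        refine subset_trans (closedBall_subset_closedBall ?_) hsub
        nlinarith
      have hbz : ball w ρ ⊆ ball z Δ := by
        refine subset_trans (ball_subset_closedBall.trans hcb) (closedBall_subset_ball ?_)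
        nlinarith
      have hmv := area_mvp hf hρpos hball1
      have hpt : ∀ v ∈ ball w ρ, ENNReal.ofReal ‖f v‖
          ≤ ENNReal.ofReal (M T ^ (1-p)) * ENNReal.ofReal (‖f v‖ ^ p) := by
        intro v hv
        rw [← ENNReal.ofReal_mul (Real.rpow_nonneg (hM0 hT0 hT1.le) _)]
        apply ENNReal.ofReal_le_ofReal
        have hfv : ‖f v‖ ≤ M T := hMle hT0 hT1.le v (hcb (ball_subset_closedBall hv))
        calc ‖f v‖ = ‖f v‖ ^ (1-p) * ‖f v‖ ^ p := by
              have e1 : (1-p) + p = 1 := by ring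
              rw [← Real.rpow_add' (norm_nonneg _) (by rw [e1]; norm_num), e1, Real.rpow_one]
          _ ≤ M T ^ (1-p) * ‖f v‖ ^ p :=
            mul_le_mul_of_nonneg_right
              (Real.rpow_le_rpow (norm_nonneg _) hfv (by linarith))
              (Real.rpow_nonneg (norm_nonneg _) _)
      have hchain : ENNReal.ofReal (π/2 * ρ^2 * ‖f w‖) ≤ ENNReal.ofReal (M T ^ (1-p)) * I := by
        refine hmv.trans ?_
        calc ∫⁻ v in ball w ρ, ENNReal.ofReal ‖f v‖
            ≤ ∫⁻ v in ball w ρ, ENNReal.ofReal (M T ^ (1-p)) * ENNReal.ofReal (‖f v‖ ^ p) :=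
              lintegral_mono_ae ((ae_restrict_iff' measurableSet_ball).2
                (Filter.Eventually.of_forall hpt))
          _ = ENNReal.ofReal (M T ^ (1-p)) * ∫⁻ v in ball w ρ, ENNReal.ofReal (‖f v‖ ^ p) :=
              lintegral_const_mul' _ _ ENNReal.ofReal_ne_top
          _ ≤ ENNReal.ofReal (M T ^ (1-p)) * I :=
              mul_le_mul' le_rfl (lintegral_mono_set hbz)
      have hreal := (ENNReal.ofReal_le_iff_le_toReal
        (ENNReal.mul_ne_top ENNReal.ofReal_ne_top hIfin)).1 hchain
      rwa [ENNReal.toReal_mul, ENNReal.toReal_ofReal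
        (Real.rpow_nonneg (hM0 hT0 hT1.le) _), ← hJ] at hreal
    have hMt : ∀ t ∈ Ico (0:ℝ) 1, M t ≤ 2 / (π * ((1-t)*Δ/2)^2) * (M ((1+t)/2) ^ (1-p) * J) := by
      intro t ht
      have hu : 0 < 1 - t := by linarith [ht.2]
      have hπ := Real.pi_pos
      have hT0 : (0:ℝ) ≤ (1+t)/2 := by linarith [ht.1]
      have hT1 : (1+t)/2 ≤ 1 := by linarith [ht.2]
      have hMTnn : 0 ≤ M ((1+t)/2) ^ (1-p) := Real.rpow_nonneg (hM0 hT0 hT1) _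
      refine Real.sSup_le ?_ (by positivity)
      rintro x ⟨w, hw, rfl⟩
      have h := hkey t ht w hw
      rw [div_mul_eq_mul_div, le_div_iff₀ (by positivity)]
      nlinarith [h]
    set Q := sSup ((fun t => (1-t) ^ (2/p) * M t) '' Ico 0 1) with hQdef
    have hQbdd : BddAbove ((fun t => (1-t) ^ (2/p) * M t) '' Ico 0 1) := by
      refine ⟨max (M 1) 0, ?_⟩
      rintro x ⟨t, ht, rfl⟩
      have h1 : (1-t) ^ (2/p) ≤ 1 :=
        Real.rpow_le_one (by linarith [ht.2]) (by linarith [ht.1]) (by positivity)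
      have h2 : M t ≤ M 1 := by
        apply csSup_le_csSup (hbdd le_rfl) ((Set.nonempty_of_mem (hzmem ht.1)).image _)
        exact Set.image_mono (closedBall_subset_closedBall (by nlinarith [ht.2]))
      have h3 : 0 ≤ M t := hM0 ht.1 ht.2.le
      calc (1-t) ^ (2/p) * M t ≤ 1 * M 1 := mul_le_mul h1 h2 h3 zero_le_one
        _ ≤ max (M 1) 0 := by rw [one_mul]; exact le_max_left _ _
    have hQmem0 : M 0 ≤ Q := by
      apply le_csSup hQbdd
      exact ⟨0, ⟨le_rfl, one_pos⟩, by norm_num⟩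
    have hQ0 : 0 ≤ Q := le_trans (hM0 le_rfl zero_le_one) hQmem0
    set K := 8 * (2:ℝ) ^ (2*(1-p)/p) / (π * Δ^2) with hKdef
    have hKpos : 0 < K := by
      have := Real.pi_pos
      have := Real.rpow_pos_of_pos (by norm_num : (0:ℝ) < 2) (2*(1-p)/p)
      positivity
    have hQK : Q ≤ K * J * Q ^ (1-p) := by
      have hQpnn : 0 ≤ Q ^ (1-p) := Real.rpow_nonneg hQ0 _
      refine Real.sSup_le ?_ (by positivity)
      rintro x ⟨t, ht, rfl⟩
      set T := (1+t)/2 with hT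
      have hT0 : (0:ℝ) ≤ T := by rw [hT]; linarith [ht.1]
      have hT1 : T < 1 := by rw [hT]; linarith [ht.2]
      have hu : 0 < 1 - t := by linarith [ht.2]
      have h1T : 0 < 1 - T := by linarith
      have hMT : M T ≤ (1-T) ^ (-(2/p)) * Q := by
        have hmemT : (1-T) ^ (2/p) * M T ≤ Q := le_csSup hQbdd ⟨T, ⟨hT0, hT1⟩, rfl⟩
        have hstep : (1-T) ^ (-(2/p)) * ((1-T) ^ (2/p) * M T) ≤ (1-T) ^ (-(2/p)) * Q :=
          mul_le_mul_of_nonneg_left hmemT (Real.rpow_nonneg h1T.le _)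
        calc M T = (1-T) ^ (-(2/p)) * ((1-T) ^ (2/p) * M T) := by
              rw [← mul_assoc, ← Real.rpow_add h1T]; norm_num
          _ ≤ _ := hstep
      have hMTp : M T ^ (1-p) ≤ ((1-T) ^ (-(2/p))) ^ (1-p) * Q ^ (1-p) := by
        rw [← Real.mul_rpow (Real.rpow_nonneg h1T.le _) hQ0]
        exact Real.rpow_le_rpow (hM0 hT0 hT1.le) hMT (by linarith)
      have hMt' := hMt t ht
      have h1Teq : 1 - T = (1-t)/2 := by rw [hT]; ring
      have hρinv : (0:ℝ) ≤ 2 / (π * ((1-t)*Δ/2)^2) := by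
        have := Real.pi_pos; positivity
      calc (1-t) ^ (2/p) * M t
          ≤ (1-t) ^ (2/p) * (2 / (π * ((1-t)*Δ/2)^2) * (M T ^ (1-p) * J)) :=
            mul_le_mul_of_nonneg_left hMt' (Real.rpow_nonneg hu.le _)
        _ ≤ (1-t) ^ (2/p) * (2 / (π * ((1-t)*Δ/2)^2)
              * (((1-T) ^ (-(2/p))) ^ (1-p) * Q ^ (1-p) * J)) := by
            apply mul_le_mul_of_nonneg_left ?_ (Real.rpow_nonneg hu.le _)
            apply mul_le_mul_of_nonneg_left ?_ hρinv
            exact mul_le_mul_of_nonneg_right hMTp hJ0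
        _ = K * J * Q ^ (1-p) := by
            rw [h1Teq]
            have hmagic := rpow_magic (u := 1-t) hp hu hΔ
            calc (1-t) ^ (2/p) * (2 / (π * ((1-t)*Δ/2)^2)
                  * ((((1-t)/2) ^ (-(2/p))) ^ (1-p) * Q ^ (1-p) * J))
                = ((1-t) ^ (2/p) * (2 / (π * ((1-t)*Δ/2)^2)
                    * (((1-t)/2) ^ (-(2/p))) ^ (1-p))) * (Q ^ (1-p) * J) := by ring
              _ = K * J * Q ^ (1-p) := by rw [hmagic, hKdef]; ring
    have hQp : Q ^ p ≤ K * J := by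
      rcases eq_or_lt_of_le hQ0 with hQz | hQpos
      · rw [← hQz, Real.zero_rpow hp.ne']; positivity
      · have h2 := mul_le_mul_of_nonneg_right hQK (Real.rpow_nonneg hQ0 (p-1))
        calc Q ^ p = Q * Q ^ (p-1) := by
              nth_rewrite 2 [← Real.rpow_one Q]
              rw [← Real.rpow_add hQpos]; norm_num
          _ ≤ K * J * Q ^ (1-p) * Q ^ (p-1) := h2
          _ = K * J := by
              rw [mul_assoc, ← Real.rpow_add hQpos]
              norm_num
    have hfzQ : ‖f z‖ ≤ Q := le_trans (hMle le_rfl zero_le_one z (hzmem le_rfl)) hQmem0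
    have hfzp : ‖f z‖ ^ p ≤ K * J :=
      le_trans (Real.rpow_le_rpow (norm_nonneg _) hfzQ hp.le) hQp
    have hCK : smvConst p = K * Δ^2 := by
      rw [smvConst, if_pos hp1, hKdef]
      field_simp
    have hfinal : ‖f z‖ ^ p * Δ ^ 2 ≤ smvConst p * J := by
      rw [hCK]
      nlinarith [hfzp, sq_nonneg Δ, mul_le_mul_of_nonneg_right hfzp (sq_nonneg Δ)]
    calc ENNReal.ofReal (‖f z‖^p * Δ^2)
        ≤ ENNReal.ofReal (smvConst p * J) := ENNReal.ofReal_le_ofReal hfinal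
      _ = ENNReal.ofReal (smvConst p) * ENNReal.ofReal J :=
          ENNReal.ofReal_mul (smvConst_pos hp).le
      _ ≤ ENNReal.ofReal (smvConst p) * I := mul_le_mul' le_rfl hJle
  -- ========== case p > 1 : Hölder ==========
  · have hπ := Real.pi_pos
    have hcbsub : ball z Δ ⊆ ball (0:ℂ) 1 := ball_subset_closedBall.trans hsub
    set q := Real.conjExponent p with hqdef
    have hconj : Real.HolderConjugate p q := Real.HolderConjugate.conjExponent hp1
    have hqpos : 0 < q := hconj.symm.pos
    have hqp : (1/q) * p = p - 1 := by
      rw [hqdef, Real.conjExponent]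
      field_simp
    have hmv := area_mvp hf hΔ hsub
    have hmeas : AEMeasurable (fun v : ℂ => ENNReal.ofReal ‖f v‖) (volume.restrict (ball z Δ)) :=
      (((hf.continuousOn.mono hcbsub).norm).aemeasurable measurableSet_ball).ennreal_ofReal
    have hhold := ENNReal.lintegral_mul_le_Lp_mul_Lq (volume.restrict (ball z Δ)) hconj hmeas
      (aemeasurable_const (b := (1:ℝ≥0∞)))
    simp only [Pi.mul_apply, mul_one, ENNReal.one_rpow, lintegral_const,
      Measure.restrict_apply_univ, one_mul] at hhold
    have hV : volume (ball z Δ) = ENNReal.ofReal (π * Δ^2) := by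
      rw [Complex.volume_ball,
        show ((NNReal.pi : ℝ≥0∞)) = ENNReal.ofReal π by
          rw [← NNReal.coe_real_pi]; exact ENNReal.ofReal_coe_nnreal.symm,
        ← ENNReal.ofReal_pow hΔ.le, ← ENNReal.ofReal_mul (by positivity)]
      congr 1
      ring
    have hIP : ∫⁻ v in ball z Δ, (ENNReal.ofReal ‖f v‖) ^ p = I := by
      rw [hI]
      apply lintegral_congr
      intro v
      rw [ENNReal.ofReal_rpow_of_nonneg (norm_nonneg _) hp.le]
    rw [hIP, hV] at hhold
    have h1 : ENNReal.ofReal (π/2 * Δ^2 * ‖f z‖)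
        ≤ I ^ (1/p) * (ENNReal.ofReal (π * Δ^2)) ^ (1/q) := hmv.trans hhold
    have h2 := ENNReal.rpow_le_rpow h1 hp.le
    have hIt : I ^ (1/p) ≠ ⊤ := ENNReal.rpow_ne_top_of_nonneg (by positivity) hIfin
    have hVt : (ENNReal.ofReal (π * Δ^2)) ^ (1/q) ≠ ⊤ :=
      ENNReal.rpow_ne_top_of_nonneg (by positivity) ENNReal.ofReal_ne_top
    rw [ENNReal.mul_rpow_of_ne_top hIt hVt, ← ENNReal.rpow_mul, ← ENNReal.rpow_mul,
      one_div_mul_cancel hp.ne', ENNReal.rpow_one, hqp,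
      ENNReal.ofReal_rpow_of_nonneg (x := π/2 * Δ^2 * ‖f z‖) (by positivity) hp.le,
      ENNReal.ofReal_rpow_of_nonneg (x := π * Δ^2) (by positivity)
        (by linarith : (0:ℝ) ≤ p - 1)] at h2
    -- h2 : ofReal ((π/2 * Δ^2 * ‖f z‖) ^ p) ≤ I * ofReal ((π * Δ^2) ^ (p-1))
    set c₀ := (π/2) ^ (-p) * (Δ^2) ^ (1-p) with hc₀
    have hc₀pos : 0 < c₀ := by
      have := Real.rpow_pos_of_pos (show (0:ℝ) < π/2 by positivity) (-p)
      have := Real.rpow_pos_of_pos (show (0:ℝ) < Δ^2 by positivity) (1-p)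
      positivity
    have hkeyreal : ‖f z‖ ^ p * Δ ^ 2 = c₀ * (π/2 * Δ^2 * ‖f z‖) ^ p := by
      rw [Real.mul_rpow (by positivity) (norm_nonneg _), Real.mul_rpow (by positivity) (by positivity),
        hc₀]
      rw [show (π/2) ^ (-p) * (Δ^2) ^ (1-p) * ((π/2) ^ p * (Δ ^ 2) ^ p * ‖f z‖ ^ p)
          = ((π/2) ^ (-p) * (π/2) ^ p) * ((Δ^2) ^ (1-p) * (Δ ^ 2) ^ p) * ‖f z‖ ^ p by ring,
        ← Real.rpow_add (by positivity : (0:ℝ) < π/2), ← Real.rpow_add (by positivity : (0:ℝ) < Δ^2)]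
      norm_num
      ring
    calc ENNReal.ofReal (‖f z‖ ^ p * Δ ^ 2)
        = ENNReal.ofReal c₀ * ENNReal.ofReal ((π/2 * Δ^2 * ‖f z‖) ^ p) := by
          rw [← ENNReal.ofReal_mul hc₀pos.le, hkeyreal]
      _ ≤ ENNReal.ofReal c₀ * (I * ENNReal.ofReal ((π * Δ^2) ^ (p-1))) := mul_le_mul' le_rfl h2
      _ = (ENNReal.ofReal c₀ * ENNReal.ofReal ((π * Δ^2) ^ (p-1))) * I := by ring
      _ ≤ ENNReal.ofReal (smvConst p) * I := by
          apply mul_le_mul' ?_ le_rfl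
          rw [← ENNReal.ofReal_mul hc₀pos.le]
          apply ENNReal.ofReal_le_ofReal
          rw [hc₀, smvConst, if_neg (not_le.mpr hp1)]
          rw [Real.mul_rpow (by positivity) (by positivity)]
          rw [show (π/2) ^ (-p) * (Δ^2) ^ (1-p) * (π ^ (p-1) * (Δ^2) ^ (p-1))
              = (π/2) ^ (-p) * π ^ (p-1) * ((Δ^2) ^ (1-p) * (Δ^2) ^ (p-1)) by ring,
            ← Real.rpow_add (by positivity : (0:ℝ) < Δ^2)]
          norm_num
          apply mul_le_mul_of_nonneg_left ?_ (Real.rpow_nonneg (by positivity) _)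
          exact Real.rpow_le_rpow hπ.le (by nlinarith [Real.pi_le_four]) (by linarith)

noncomputable def ptC (p α : ℝ) : ℝ :=
  smvConst p * max ((3:ℝ) ^ (1-α*p)) ((5:ℝ) ^ (1-α*p)) * (4:ℝ) ^ (α*p+1)

lemma ptC_pos {p α : ℝ} (hp : 0 < p) : 0 < ptC p α := by
  unfold ptC
  have h1 := smvConst_pos hp
  have h2 := Real.rpow_pos_of_pos (by norm_num : (0:ℝ) < 3) (1-α*p)
  have h3 := Real.rpow_pos_of_pos (by norm_num : (0:ℝ) < 4) (α*p+1)
  have h4 : 0 < max ((3:ℝ) ^ (1-α*p)) ((5:ℝ) ^ (1-α*p)) := lt_max_iff.2 (Or.inl h2)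
  exact mul_pos (mul_pos h1 h4) h3

lemma pointwise_bound {f : ℂ → ℂ} (hf : AnalyticOn ℂ f (ball 0 1)) {p α : ℝ}
    (hp : 0 < p) {w : ℂ} (hw : w ∈ ball (0:ℂ) 1) :
    ENNReal.ofReal (‖f w‖^p * (1-‖w‖)^(α*p+1))
      ≤ ENNReal.ofReal (ptC p α)
        * ∫⁻ v in ball (0:ℂ) 1, ENNReal.ofReal (‖f v‖^p * (1-‖v‖)^(α*p-1)) := by
  set A := ∫⁻ v in ball (0:ℂ) 1, ENNReal.ofReal (‖f v‖^p * (1-‖v‖)^(α*p-1)) with hA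
  have hw1 : ‖w‖ < 1 := mem_ball_zero_iff.1 hw
  set d := 1 - ‖w‖ with hd_def
  have hd : 0 < d := by rw [hd_def]; linarith
  set δ := d/4 with hδ_def
  have hδ : 0 < δ := by positivity
  have hsub : closedBall w δ ⊆ ball (0:ℂ) 1 := by
    intro v hv
    rw [mem_closedBall] at hv
    rw [mem_ball]
    calc dist v 0 ≤ dist v w + dist w 0 := dist_triangle v w 0
      _ ≤ δ + ‖w‖ := by
          rw [dist_zero_right]
          exact add_le_add hv le_rfl
      _ < 1 := by rw [hδ_def, hd_def]; linarith
  have hsmv := smv hf hp hδ hsub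
  set m₂ := max ((3:ℝ) ^ (1-α*p)) ((5:ℝ) ^ (1-α*p)) with hm₂
  have hm₂pos : 0 < m₂ :=
    lt_max_iff.2 (Or.inl (Real.rpow_pos_of_pos (by norm_num) _))
  have hpt : ∀ v ∈ ball w δ, ENNReal.ofReal (‖f v‖^p)
      ≤ ENNReal.ofReal (m₂ * δ^(1-α*p)) * ENNReal.ofReal (‖f v‖^p * (1-‖v‖)^(α*p-1)) := by
    intro v hv
    rw [mem_ball] at hv
    have hvw : ‖v‖ - ‖w‖ ≤ dist v w := by
      rw [dist_eq_norm]; exact norm_sub_norm_le v w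
    have hwv : ‖w‖ - ‖v‖ ≤ dist v w := by
      rw [dist_comm, dist_eq_norm]; exact norm_sub_norm_le w v
    have h3 : 3*δ ≤ 1 - ‖v‖ := by
      rw [hδ_def, hd_def] at hv ⊢
      linarith
    have h5 : 1 - ‖v‖ ≤ 5*δ := by
      rw [hδ_def, hd_def] at hv ⊢
      linarith
    have hv1 : 0 < 1 - ‖v‖ := by linarith
    have hwt : (1-‖v‖) ^ (1-α*p) ≤ m₂ * δ^(1-α*p) := by
      rcases le_or_gt 0 (1-α*p) with he | he
      · calc (1-‖v‖) ^ (1-α*p) ≤ (5*δ) ^ (1-α*p) :=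
              Real.rpow_le_rpow hv1.le h5 he
          _ = 5 ^ (1-α*p) * δ ^ (1-α*p) := Real.mul_rpow (by norm_num) hδ.le
          _ ≤ m₂ * δ^(1-α*p) :=
              mul_le_mul_of_nonneg_right (le_max_right _ _) (Real.rpow_nonneg hδ.le _)
      · calc (1-‖v‖) ^ (1-α*p) ≤ (3*δ) ^ (1-α*p) :=
              Real.rpow_le_rpow_of_nonpos (by positivity) h3 he.le
          _ = 3 ^ (1-α*p) * δ ^ (1-α*p) := Real.mul_rpow (by norm_num) hδ.le
          _ ≤ m₂ * δ^(1-α*p) :=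
              mul_le_mul_of_nonneg_right (le_max_left _ _) (Real.rpow_nonneg hδ.le _)
    rw [← ENNReal.ofReal_mul (by positivity)]
    apply ENNReal.ofReal_le_ofReal
    have hid : ‖f v‖^p = ‖f v‖^p * (1-‖v‖)^(α*p-1) * (1-‖v‖)^(1-α*p) := by
      rw [mul_assoc, ← Real.rpow_add hv1]
      norm_num
    conv_lhs => rw [hid]
    calc ‖f v‖^p * (1-‖v‖)^(α*p-1) * (1-‖v‖)^(1-α*p)
        ≤ ‖f v‖^p * (1-‖v‖)^(α*p-1) * (m₂ * δ^(1-α*p)) := by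
          apply mul_le_mul_of_nonneg_left hwt
          have := Real.rpow_nonneg hv1.le (α*p-1)
          have := Real.rpow_nonneg (norm_nonneg (f v)) p
          positivity
      _ = m₂ * δ^(1-α*p) * (‖f v‖^p * (1-‖v‖)^(α*p-1)) := by ring
  have hAw : ∫⁻ v in ball w δ, ENNReal.ofReal (‖f v‖^p)
      ≤ ENNReal.ofReal (m₂ * δ^(1-α*p)) * A := by
    calc ∫⁻ v in ball w δ, ENNReal.ofReal (‖f v‖^p)
        ≤ ∫⁻ v in ball w δ,
            ENNReal.ofReal (m₂ * δ^(1-α*p)) * ENNReal.ofReal (‖f v‖^p * (1-‖v‖)^(α*p-1)) :=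
          lintegral_mono_ae ((ae_restrict_iff' measurableSet_ball).2
            (Filter.Eventually.of_forall hpt))
      _ = ENNReal.ofReal (m₂ * δ^(1-α*p))
            * ∫⁻ v in ball w δ, ENNReal.ofReal (‖f v‖^p * (1-‖v‖)^(α*p-1)) :=
          lintegral_const_mul' _ _ ENNReal.ofReal_ne_top
      _ ≤ ENNReal.ofReal (m₂ * δ^(1-α*p)) * A :=
          mul_le_mul' le_rfl (lintegral_mono_set (ball_subset_closedBall.trans hsub))
  have hids : ‖f w‖^p * (1-‖w‖)^(α*p+1) = (4:ℝ)^(α*p+1) * δ^(α*p-1) * (‖f w‖^p * δ^2) := by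
    have h4δ : 1 - ‖w‖ = 4*δ := by rw [hδ_def, hd_def]; ring
    rw [h4δ, Real.mul_rpow (by norm_num) hδ.le]
    have : δ^(α*p-1) * δ^(2:ℕ) = δ^(α*p+1) := by
      rw [← Real.rpow_natCast δ 2, ← Real.rpow_add hδ]
      congr 1
      push_cast
      ring
    push_cast at this
    rw [← this]
    ring
  calc ENNReal.ofReal (‖f w‖^p * (1-‖w‖)^(α*p+1))
      = ENNReal.ofReal ((4:ℝ)^(α*p+1) * δ^(α*p-1)) * ENNReal.ofReal (‖f w‖^p * δ^2) := by
        rw [← ENNReal.ofReal_mul (by positivity), hids]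
    _ ≤ ENNReal.ofReal ((4:ℝ)^(α*p+1) * δ^(α*p-1))
          * (ENNReal.ofReal (smvConst p) * (ENNReal.ofReal (m₂ * δ^(1-α*p)) * A)) := by
        apply mul_le_mul' le_rfl
        exact hsmv.trans (mul_le_mul' le_rfl hAw)
    _ = ENNReal.ofReal ((4:ℝ)^(α*p+1) * δ^(α*p-1) * (smvConst p * (m₂ * δ^(1-α*p)))) * A := by
        rw [ENNReal.ofReal_mul (le_of_lt (show (0:ℝ) < (4:ℝ)^(α*p+1) * δ^(α*p-1) by
            have := Real.rpow_pos_of_pos (show (0:ℝ) < 4 by norm_num) (α*p+1)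
            have := Real.rpow_pos_of_pos hδ (α*p-1)
            positivity)),
          ENNReal.ofReal_mul (smvConst_pos hp).le]
        ring
    _ = ENNReal.ofReal (ptC p α) * A := by
        congr 2
        rw [ptC]
        rw [show (4:ℝ)^(α*p+1) * δ^(α*p-1) * (smvConst p * (m₂ * δ^(1-α*p)))
            = smvConst p * m₂ * (4:ℝ)^(α*p+1) * (δ^(α*p-1) * δ^(1-α*p)) by ring,
          ← Real.rpow_add hδ]
        norm_num
        exact Or.inl (Or.inl hm₂)

/-- Lemma 2 (dimension one, `p = q`): the weighted Bergman-type norm with weight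
`(1-|w|)^{s(α+1/p)-2}` is dominated by the `F^{p,p}_α` norm. -/
theorem bergman_embedding_Fpq (p s α : ℝ) (hp : 0 < p) (hps : p ≤ s) (hα : 0 < α) :
    ∃ c : ℝ, 0 < c ∧ ∀ f : ℂ → ℂ, AnalyticOn ℂ f (ball 0 1) →
      (ENNReal.ofReal (Real.pi)⁻¹ *
        ∫⁻ w in ball (0 : ℂ) 1,
          ENNReal.ofReal (‖f w‖ ^ s * (1 - ‖w‖) ^ (s * (α + 1 / p) - 2))) ^ (1 / s)
      ≤ ENNReal.ofReal c *
        ((ENNReal.ofReal (2 * Real.pi))⁻¹ *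
          ∫⁻ θ in Set.Ioc (0 : ℝ) (2 * Real.pi),
            ∫⁻ r in Set.Ioc (0 : ℝ) 1,
              ENNReal.ofReal (‖f ((r : ℂ) * Complex.exp (θ * Complex.I))‖ ^ p
                * (1 - r) ^ (α * p - 1))) ^ (1 / p) := by
  have hπ := Real.pi_pos
  have hs : 0 < s := lt_of_lt_of_le hp hps
  set e := (s - p)/p with he
  have he0 : 0 ≤ e := div_nonneg (by linarith) hp.le
  set K₄ : ℝ≥0∞ := ENNReal.ofReal π⁻¹ * (ENNReal.ofReal (ptC p α)) ^ e with hK₄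
  have hK₄top : K₄ ≠ ⊤ := ENNReal.mul_ne_top ENNReal.ofReal_ne_top
    (ENNReal.rpow_ne_top_of_nonneg he0 ENNReal.ofReal_ne_top)
  set u : ℝ≥0∞ := ((ENNReal.ofReal (2*π))⁻¹) ^ (1/p) with hu_def
  have h2π0 : ENNReal.ofReal (2*π) ≠ 0 := (ENNReal.ofReal_pos.2 (by positivity)).ne'
  have hinv0 : (ENNReal.ofReal (2*π))⁻¹ ≠ 0 := ENNReal.inv_ne_zero.2 ENNReal.ofReal_ne_top
  have hinvt : (ENNReal.ofReal (2*π))⁻¹ ≠ ⊤ := ENNReal.inv_ne_top.2 h2π0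
  have hu0 : u ≠ 0 := by
    rw [hu_def]
    exact (ENNReal.rpow_pos (pos_iff_ne_zero.2 hinv0) hinvt).ne'
  have hut : u ≠ ⊤ := ENNReal.rpow_ne_top_of_nonneg (by positivity) hinvt
  have hcne : K₄ ^ (1/s) * u⁻¹ ≠ ⊤ :=
    ENNReal.mul_ne_top (ENNReal.rpow_ne_top_of_nonneg (by positivity) hK₄top)
      (ENNReal.inv_ne_top.2 hu0)
  refine ⟨(K₄ ^ (1/s) * u⁻¹).toReal + 1, by positivity, ?_⟩
  intro f hf
  set c : ℝ := (K₄ ^ (1/s) * u⁻¹).toReal + 1 with hc_def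
  have hcpos : 0 < c := by positivity
  have hcge : K₄ ^ (1/s) * u⁻¹ ≤ ENNReal.ofReal c := by
    calc K₄ ^ (1/s) * u⁻¹ = ENNReal.ofReal ((K₄ ^ (1/s) * u⁻¹).toReal) :=
          (ENNReal.ofReal_toReal hcne).symm
      _ ≤ ENNReal.ofReal c := ENNReal.ofReal_le_ofReal (by rw [hc_def]; linarith)
  set G : ℂ → ℝ≥0∞ := fun v => ENNReal.ofReal (‖f v‖^p * (1-‖v‖)^(α*p-1)) with hG
  set A := ∫⁻ v in ball (0:ℂ) 1, G v with hA
  set H : ℝ × ℝ → ℝ≥0∞ := fun q =>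
    ENNReal.ofReal (‖f ((q.1:ℂ) * Complex.exp (q.2 * Complex.I))‖ ^ p
      * (1 - q.1) ^ (α * p - 1)) with hH
  set Fout := ∫⁻ θ in Set.Ioc (0:ℝ) (2*π), ∫⁻ r in Set.Ioc (0:ℝ) 1,
    ENNReal.ofReal (‖f ((r : ℂ) * Complex.exp (θ * Complex.I))‖ ^ p
      * (1 - r) ^ (α * p - 1)) with hFout
  -- measurability of H on the rectangle
  have hmapsto : ∀ q : ℝ × ℝ, q ∈ Ioo (0:ℝ) 1 ×ˢ Ioo (-π) π →
      ((q.1:ℂ) * Complex.exp (q.2 * Complex.I)) ∈ ball (0:ℂ) 1 := by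
    rintro ⟨r, θ⟩ ⟨hr, _⟩
    rw [mem_ball_zero_iff, norm_mul, Complex.norm_exp_ofReal_mul_I, mul_one, Complex.norm_real,
      Real.norm_eq_abs, abs_of_pos hr.1]
    exact hr.2
  have hHmeas : AEMeasurable H (volume.restrict (Ioo (0:ℝ) 1 ×ˢ Ioo (-π) π)) := by
    have h1 : ContinuousOn (fun q : ℝ × ℝ => ‖f ((q.1:ℂ) * Complex.exp (q.2 * Complex.I))‖)
        (Ioo (0:ℝ) 1 ×ˢ Ioo (-π) π) := by
      apply continuous_norm.comp_continuousOn
      apply hf.continuousOn.comp ?_ hmapsto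
      apply Continuous.continuousOn
      continuity
    have h2 : ContinuousOn (fun q : ℝ × ℝ => (1 - q.1) ^ (α * p - 1))
        (Ioo (0:ℝ) 1 ×ˢ Ioo (-π) π) := by
      apply ContinuousOn.rpow_const
      · exact (continuous_const.sub continuous_fst).continuousOn
      · rintro ⟨r, θ⟩ ⟨hr, _⟩
        exact Or.inl (by simp only; linarith [hr.2])
    exact ((h1.rpow_const fun q _ => Or.inr hp.le).mul h2).aemeasurable
      (measurableSet_Ioo.prod measurableSet_Ioo) |>.ennreal_ofReal
  -- Step A : A ≤ ∫ over rectangle of H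
  have hstepA : A ≤ ∫⁻ q in Ioo (0:ℝ) 1 ×ˢ Ioo (-π) π, H q := by
    rw [hA, lintegral_ball_polar G 0 1]
    apply lintegral_mono_ae ((ae_restrict_iff' (measurableSet_Ioo.prod measurableSet_Ioo)).2
      (Filter.Eventually.of_forall ?_))
    rintro ⟨r, θ⟩ ⟨hr, hθ⟩
    have hnorm : ‖(0:ℂ) + (r:ℂ) * Complex.exp (θ * Complex.I)‖ = r := by
      rw [zero_add, norm_mul, Complex.norm_exp_ofReal_mul_I, mul_one, Complex.norm_real,
        Real.norm_eq_abs, abs_of_pos hr.1]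
    calc ENNReal.ofReal r * G ((0:ℂ) + (r:ℂ) * Complex.exp (θ * Complex.I))
        ≤ 1 * G ((0:ℂ) + (r:ℂ) * Complex.exp (θ * Complex.I)) :=
          mul_le_mul' (ENNReal.ofReal_le_one.2 hr.2.le) le_rfl
      _ = H (r, θ) := by
          rw [one_mul, hG, hH]
          simp only
          rw [hnorm, zero_add]
  -- Step B : rectangle integral ≤ Fout
  have hstepB : ∫⁻ q in Ioo (0:ℝ) 1 ×ˢ Ioo (-π) π, H q ≤ Fout := by
    have hrestr : (volume : Measure (ℝ × ℝ)).restrict (Ioo (0:ℝ) 1 ×ˢ Ioo (-π) π)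
        = (volume.restrict (Ioo (0:ℝ) 1)).prod (volume.restrict (Ioo (-π) π)) := by
      rw [Measure.volume_eq_prod, Measure.prod_restrict]
    have hswap : ∫⁻ q in Ioo (0:ℝ) 1 ×ˢ Ioo (-π) π, H q
        = ∫⁻ θ in Ioo (-π) π, ∫⁻ r in Ioo (0:ℝ) 1, H (r, θ) := by
      rw [hrestr] at hHmeas ⊢
      exact lintegral_prod_symm _ hHmeas
    rw [hswap]
    set K : ℝ → ℝ≥0∞ := fun θ => ∫⁻ r in Ioo (0:ℝ) 1, H (r, θ) with hK
    have hKper : ∀ θ : ℝ, K (θ - 2*π) = K θ := by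
      intro θ
      apply lintegral_congr
      intro r
      rw [hH]
      simp only
      congr 3
      push_cast
      rw [sub_mul, Complex.exp_sub, Complex.exp_two_pi_mul_I, div_one]
    have hKmono : ∀ θ : ℝ, K θ ≤ ∫⁻ r in Set.Ioc (0:ℝ) 1,
        ENNReal.ofReal (‖f ((r : ℂ) * Complex.exp (θ * Complex.I))‖ ^ p
          * (1 - r) ^ (α * p - 1)) := by
      intro θ
      exact lintegral_mono_set Ioo_subset_Ioc_self
    have hsub1 : Ioo (-π) π ⊆ Ioo (-π) 0 ∪ Ico 0 π := by
      rintro θ ⟨h1, h2⟩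
      rcases lt_or_ge θ 0 with h | h
      · exact Or.inl ⟨h1, h⟩
      · exact Or.inr ⟨h, h2⟩
    calc ∫⁻ θ in Ioo (-π) π, K θ
        ≤ ∫⁻ θ in Ioo (-π) 0 ∪ Ico 0 π, K θ := lintegral_mono_set hsub1
      _ ≤ (∫⁻ θ in Ioo (-π) 0, K θ) + ∫⁻ θ in Ico 0 π, K θ := lintegral_union_le _ _ _
      _ = (∫⁻ θ in Ioo π (2*π), K θ) + ∫⁻ θ in Ioo 0 π, K θ := by
          congr 1
          · have hpre : (fun y : ℝ => y - 2*π) ⁻¹' (Ioo (-π) 0) = Ioo π (2*π) := by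
              ext y
              simp only [Set.mem_preimage, mem_Ioo]
              constructor <;> rintro ⟨h1, h2⟩ <;> constructor <;> linarith
            have hshift := (measurePreserving_sub_right volume (2*π)).setLIntegral_comp_preimage_emb
              (MeasurableEquiv.subRight (2*π)).measurableEmbedding K (Ioo (-π) 0)
            rw [hpre] at hshift
            rw [← hshift]
            exact lintegral_congr fun θ => (hKper θ).symm ▸ rfl
          · exact setLIntegral_congr (Ioo_ae_eq_Ico (a := (0:ℝ)) (b := π)).symm
      _ = ∫⁻ θ in Ioo π (2*π) ∪ Ioo 0 π, K θ := by
          rw [lintegral_union measurableSet_Ioo]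
          rw [Set.disjoint_left]
          rintro θ ⟨h1, h2⟩ ⟨h3, h4⟩
          linarith
      _ ≤ ∫⁻ θ in Set.Ioc 0 (2*π), K θ := by
          apply lintegral_mono_set
          rintro θ (⟨h1, h2⟩ | ⟨h1, h2⟩) <;> exact ⟨by linarith, by linarith⟩
      _ ≤ Fout := by
          rw [hFout]
          exact lintegral_mono hKmono
  have hAF : A ≤ Fout := hstepA.trans hstepB
  by_cases hFtop : Fout = ⊤
  · rw [hFtop]
    have h1 : (ENNReal.ofReal (2*π))⁻¹ * (⊤:ℝ≥0∞) = ⊤ := by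
      rw [ENNReal.mul_top hinv0]
    rw [h1, ENNReal.top_rpow_of_pos (by positivity), ENNReal.mul_top
      (ENNReal.ofReal_pos.2 hcpos).ne']
    exact le_top
  · -- pointwise identity
    have hptid : ∀ w, w ∈ ball (0:ℂ) 1 →
        ENNReal.ofReal (‖f w‖ ^ s * (1 - ‖w‖) ^ (s * (α + 1 / p) - 2))
          = (ENNReal.ofReal (‖f w‖^p * (1-‖w‖)^(α*p+1))) ^ e * G w := by
      intro w hw
      have hD : 0 < 1 - ‖w‖ := by have := mem_ball_zero_iff.1 hw; linarith
      have hb1 : (0:ℝ) ≤ ‖f w‖^p * (1-‖w‖)^(α*p+1) := by positivity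
      rw [hG]
      simp only
      rw [ENNReal.ofReal_rpow_of_nonneg hb1 he0, ← ENNReal.ofReal_mul
        (Real.rpow_nonneg hb1 _)]
      congr 1
      rw [Real.mul_rpow (Real.rpow_nonneg (norm_nonneg _) _) (Real.rpow_nonneg hD.le _),
        ← Real.rpow_mul (norm_nonneg _), ← Real.rpow_mul hD.le]
      have h1 : ‖f w‖ ^ (p * e) * ‖f w‖ ^ p = ‖f w‖ ^ s := by
        rw [← Real.rpow_add' (norm_nonneg _) (by
          rw [he]; field_simp; simpa using hs.ne')]
        congr 1
        rw [he]; field_simp; ring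
      have h2 : (1-‖w‖) ^ ((α*p+1) * e) * (1-‖w‖) ^ (α*p-1) = (1-‖w‖) ^ (s*(α+1/p)-2) := by
        rw [← Real.rpow_add hD]
        congr 1
        rw [he]; field_simp; ring
      calc ‖f w‖ ^ s * (1 - ‖w‖) ^ (s * (α + 1 / p) - 2)
          = (‖f w‖ ^ (p * e) * ‖f w‖ ^ p) * ((1-‖w‖) ^ ((α*p+1) * e) * (1-‖w‖) ^ (α*p-1)) := by
            rw [h1, h2]
        _ = ‖f w‖ ^ (p*e) * (1-‖w‖) ^ ((α*p+1)*e) * (‖f w‖^p * (1-‖w‖)^(α*p-1)) := by ring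
    have hCFt : (ENNReal.ofReal (ptC p α) * Fout) ^ e ≠ ⊤ :=
      ENNReal.rpow_ne_top_of_nonneg he0 (ENNReal.mul_ne_top ENNReal.ofReal_ne_top hFtop)
    have hLle : (∫⁻ w in ball (0:ℂ) 1,
        ENNReal.ofReal (‖f w‖ ^ s * (1 - ‖w‖) ^ (s * (α + 1 / p) - 2)))
          ≤ (ENNReal.ofReal (ptC p α) * Fout) ^ e * A := by
      calc ∫⁻ w in ball (0:ℂ) 1,
            ENNReal.ofReal (‖f w‖ ^ s * (1 - ‖w‖) ^ (s * (α + 1 / p) - 2))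
          ≤ ∫⁻ w in ball (0:ℂ) 1, (ENNReal.ofReal (ptC p α) * Fout) ^ e * G w := by
            apply lintegral_mono_ae ((ae_restrict_iff' measurableSet_ball).2
              (Filter.Eventually.of_forall fun w hw => ?_))
            rw [hptid w hw]
            apply mul_le_mul' (ENNReal.rpow_le_rpow ?_ he0) le_rfl
            exact (pointwise_bound hf hp hw).trans (mul_le_mul' le_rfl hAF)
        _ = (ENNReal.ofReal (ptC p α) * Fout) ^ e * A :=
            lintegral_const_mul' _ _ hCFt
    have hLF : (∫⁻ w in ball (0:ℂ) 1,
        ENNReal.ofReal (‖f w‖ ^ s * (1 - ‖w‖) ^ (s * (α + 1 / p) - 2)))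
          ≤ ENNReal.ofReal (ptC p α) ^ e * Fout ^ (s/p) := by
      refine hLle.trans ?_
      rw [ENNReal.mul_rpow_of_ne_top ENNReal.ofReal_ne_top hFtop, mul_assoc]
      apply mul_le_mul' le_rfl
      calc Fout ^ e * A ≤ Fout ^ e * Fout ^ (1:ℝ) := by
            rw [ENNReal.rpow_one]; exact mul_le_mul' le_rfl hAF
        _ = Fout ^ (s/p) := by
            rw [← ENNReal.rpow_add_of_nonneg _ _ he0 zero_le_one]
            congr 1
            rw [he]; field_simp; ring
    calc (ENNReal.ofReal π⁻¹ * ∫⁻ w in ball (0:ℂ) 1,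
          ENNReal.ofReal (‖f w‖ ^ s * (1 - ‖w‖) ^ (s * (α + 1 / p) - 2))) ^ (1 / s)
        ≤ (K₄ * Fout ^ (s/p)) ^ (1/s) := by
          apply ENNReal.rpow_le_rpow ?_ (by positivity)
          rw [hK₄, mul_assoc]
          exact mul_le_mul' le_rfl hLF
      _ = K₄ ^ (1/s) * Fout ^ (1/p) := by
          rw [ENNReal.mul_rpow_of_ne_top hK₄top
            (ENNReal.rpow_ne_top_of_nonneg (by positivity) hFtop), ← ENNReal.rpow_mul]
          rw [show s/p * (1/s) = 1/p by
            field_simp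
            try ring]
      _ = (K₄ ^ (1/s) * u⁻¹) * (u * Fout ^ (1/p)) := by
          rw [mul_assoc, ← mul_assoc u⁻¹, ENNReal.inv_mul_cancel hu0 hut, one_mul]
      _ ≤ ENNReal.ofReal c * (u * Fout ^ (1/p)) := mul_le_mul' hcge le_rfl
      _ = ENNReal.ofReal c * ((ENNReal.ofReal (2*π))⁻¹ * Fout) ^ (1/p) := by
          rw [ENNReal.mul_rpow_of_ne_top hinvt hFtop, hu_def]
end
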